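/- arXiv:2104.02266 — 6 statements merged into one kernel-verified Lean document; each statement's English description precedes it below -/
import Mathlib

section
/- For any tree T of order n, the maximum weight of a boundary independent broadcast on T satisfies α_bn(T) ≤ n - b(T) + ρ(T), where b(T) is the number of branch vertices and ρ(T) is the number of branch vertices belonging to at most one endpath. -/
open SimpleGraph Finset
open scoped Classical

noncomputable section

/-- Eccentricity of a vertex. -/
def gecc {V : Type*} (G : SimpleGraph V) [Fintype V] (v : V) : ℕ :=
  Finset.univ.sup fun u => G.dist v u

/-- A broadcast: `f v ≤ e(v)` for all `v`. -/
def IsBroadcast {V : Type*} (G : SimpleGraph V) [Fintype V] (f : V → ℕ) : Prop :=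
  ∀ v, f v ≤ gecc G v

/-- `u` hears `f` from `v`. -/
def Hears {V : Type*} (G : SimpleGraph V) (f : V → ℕ) (u v : V) : Prop :=
  0 < f v ∧ G.dist u v ≤ f v

/-- Boundary independent broadcast: a vertex hearing two or more broadcasting
vertices lies in the boundary of each. -/
def BnIndep {V : Type*} (G : SimpleGraph V) [Fintype V] (f : V → ℕ) : Prop :=
  IsBroadcast G f ∧
    ∀ w v₁ v₂, v₁ ≠ v₂ → Hears G f w v₁ → Hears G f w v₂ → G.dist w v₁ = f v₁

/-- Weight of a broadcast. -/
def bweight {V : Type*} [Fintype V] (f : V → ℕ) : ℕ := ∑ v, f v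

/-- The boundary independence number. -/
def alphaBn {V : Type*} (G : SimpleGraph V) [Fintype V] : ℕ :=
  sSup {w | ∃ f, BnIndep G f ∧ bweight f = w}

/-- Set of branch vertices (degree at least 3). -/
def branchSet {V : Type*} (G : SimpleGraph V) [Fintype V] : Finset V :=
  Finset.univ.filter fun v => 3 ≤ G.degree v

/-- `l` is a leaf joined to `v` by an endpath (all internal vertices of degree 2). -/
def IsEndpathTo {V : Type*} (G : SimpleGraph V) [Fintype V] (v l : V) : Prop :=
  G.degree l = 1 ∧ ∃ p : G.Walk v l, p.IsPath ∧
    ∀ u ∈ p.support, u ≠ v → u ≠ l → G.degree u = 2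

/-- Leaf set `L(v)` of a vertex `v`. -/
def leafSet {V : Type*} (G : SimpleGraph V) [Fintype V] (v : V) : Finset V :=
  Finset.univ.filter fun l => IsEndpathTo G v l

/-- `R(T)`: branch vertices with at most one leaf in their leaf set. -/
def rset {V : Type*} (G : SimpleGraph V) [Fintype V] : Finset V :=
  (branchSet G).filter fun v => (leafSet G v).card ≤ 1

/-- Edge `uv` is covered by broadcasting vertex `x`. -/
def Covers {V : Type*} (G : SimpleGraph V) (f : V → ℕ) (x u v : V) : Prop :=
  0 < f x ∧ G.Adj u v ∧ G.dist u x ≤ f x ∧ G.dist v x ≤ f x ∧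
    (G.dist u x < f x ∨ G.dist v x < f x)

/-- The graph `G - U_f^E` obtained by deleting all `f`-uncovered edges. -/
def coveredSubgraph {V : Type*} (G : SimpleGraph V) (f : V → ℕ) : SimpleGraph V where
  Adj u v := G.Adj u v ∧ ∃ x, Covers G f x u v
  symm := by
    constructor
    rintro u v ⟨h, x, h1, h2, h3, h4, h5⟩
    exact ⟨h.symm, x, h1, h2.symm, h4, h3, h5.symm⟩
  loopless := by constructor; rintro u ⟨h, -⟩; exact G.loopless.irrefl u h

/-- `f` is a maximal bn-independent broadcast. -/
def MaximalBn {V : Type*} (G : SimpleGraph V) [Fintype V] (f : V → ℕ) : Prop :=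
  BnIndep G f ∧ ∀ g, BnIndep G g → (∀ v, f v ≤ g v) → g = f

/-- The `f`-private boundary of `v`: vertices of `N_f(v)` not dominated once the
broadcast strength of `v` is lowered by one. -/
def privBoundary {V : Type*} (G : SimpleGraph V) (f : V → ℕ) (v : V) : Set V :=
  {u | G.dist u v ≤ f v ∧ ∀ x, ¬ Hears G (Function.update f v (f v - 1)) u x}

/-- The branch representation: branch vertices adjacent iff the path between them
contains no other branch vertex. -/
def branchRep {V : Type*} (G : SimpleGraph V) [Fintype V] : SimpleGraph V where
  Adj b₁ b₂ := b₁ ≠ b₂ ∧ 3 ≤ G.degree b₁ ∧ 3 ≤ G.degree b₂ ∧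
    ∀ p : G.Walk b₁ b₂, p.IsPath → ∀ u ∈ p.support, 3 ≤ G.degree u → u = b₁ ∨ u = b₂
  symm := by
    constructor
    rintro a b ⟨hab, ha, hb, h⟩
    refine ⟨hab.symm, hb, ha, fun p hp u hu hdeg => ?_⟩
    have hu' : u ∈ p.reverse.support := by
      rw [SimpleGraph.Walk.support_reverse]; exact List.mem_reverse.mpr hu
    exact (h p.reverse hp.reverse u hu' hdeg).symm
  loopless := by constructor; rintro v ⟨h, -⟩; exact h rfl

/-- Hearing independent broadcast. -/
def HIndep {V : Type*} (G : SimpleGraph V) [Fintype V] (f : V → ℕ) : Prop :=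
  IsBroadcast G f ∧ ∀ u v, u ≠ v → 0 < f u → 0 < f v → f v < G.dist u v

/-- The hearing independence number. -/
def alphaH {V : Type*} (G : SimpleGraph V) [Fintype V] : ℕ :=
  sSup {w | ∃ f, HIndep G f ∧ bweight f = w}

/-- Diameter. -/
def gdiam {V : Type*} (G : SimpleGraph V) [Fintype V] : ℕ :=
  Finset.univ.sup fun v => gecc G v

namespace BnAux

open SimpleGraph

variable {V : Type*} [Fintype V] {T : SimpleGraph V}

lemma exists_walk_to_getVert {x z : V} (p : T.Walk x z) (i : ℕ) :
    ∃ w : T.Walk x (p.getVert i), w.length ≤ i := by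
  induction p generalizing i with
  | nil => exact ⟨Walk.nil, Nat.zero_le i⟩
  | cons h q ih =>
    cases i with
    | zero => exact ⟨Walk.nil, Nat.zero_le 0⟩
    | succ n =>
      obtain ⟨w, hw⟩ := ih n
      exact ⟨Walk.cons h w, by simpa using Nat.succ_le_succ hw⟩

lemma exists_walk_from_getVert {x z : V} (p : T.Walk x z) (i : ℕ) :
    ∃ w : T.Walk (p.getVert i) z, w.length ≤ p.length - i := by
  induction p generalizing i with
  | nil => exact ⟨Walk.nil, Nat.zero_le _⟩
  | cons h q ih =>
    cases i with
    | zero => exact ⟨Walk.cons h q, le_refl _⟩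
    | succ n =>
      obtain ⟨w, hw⟩ := ih n
      refine ⟨w, le_trans hw ?_⟩
      simp only [Walk.length_cons]
      omega

lemma dist_getVert_eq (hc : T.Connected) {x z : V} (p : T.Walk x z)
    (hp : p.length = T.dist x z) {i : ℕ} (hi : i ≤ p.length) :
    T.dist x (p.getVert i) = i := by
  obtain ⟨w1, hw1⟩ := exists_walk_to_getVert p i
  obtain ⟨w2, hw2⟩ := exists_walk_from_getVert p i
  have h1 : T.dist x (p.getVert i) ≤ i := le_trans (SimpleGraph.dist_le w1) hw1
  have h2 : T.dist (p.getVert i) z ≤ p.length - i := le_trans (SimpleGraph.dist_le w2) hw2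
  have h3 := hc.dist_triangle (u := x) (v := p.getVert i) (w := z)
  omega

lemma eq_of_card_two {t : Finset V} {a x y : V} (ht : t.card = 2)
    (ha : a ∈ t) (hx : x ∈ t) (hy : y ∈ t) (hxa : x ≠ a) (hya : y ≠ a) : x = y := by
  obtain ⟨c, d, hcd, rfl⟩ := Finset.card_eq_two.mp ht
  simp only [Finset.mem_insert, Finset.mem_singleton] at ha hx hy
  rcases ha with rfl | rfl <;> rcases hx with rfl | rfl <;> rcases hy with rfl | rfl <;> simp_all

lemma mem_of_card_two {t : Finset V} {x y g : V} (ht : t.card = 2)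
    (hx : x ∈ t) (hy : y ∈ t) (hxy : x ≠ y) (hg : g ∈ t) : g = x ∨ g = y := by
  obtain ⟨c, d, hcd, rfl⟩ := Finset.card_eq_two.mp ht
  simp only [Finset.mem_insert, Finset.mem_singleton] at hx hy hg
  rcases hx with rfl | rfl <;> rcases hy with rfl | rfl <;> tauto

lemma deg_one_unique {a x y : V} (h : T.degree a = 1) (hx : T.Adj a x) (hy : T.Adj a y) :
    x = y := by
  have hx' : x ∈ T.neighborFinset a := (T.mem_neighborFinset a x).mpr hx
  have hy' : y ∈ T.neighborFinset a := (T.mem_neighborFinset a y).mpr hy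
  have hcard : (T.neighborFinset a).card ≤ 1 := le_of_eq h
  exact Finset.card_le_one.mp hcard x hx' y hy'

/-- Forced-path lemma. -/
lemma forced : ∀ (n : ℕ) (a b₁ b₂ : V) (r : T.Walk a b₁) (s : T.Walk a b₂),
    r.length ≤ n → r.IsPath → s.IsPath →
    T.degree b₁ ≠ 2 → T.degree b₂ ≠ 2 → a ≠ b₁ → a ≠ b₂ →
    (∀ u ∈ r.support, u ≠ a → u ≠ b₁ → T.degree u = 2) →
    (∀ u ∈ s.support, u ≠ a → u ≠ b₂ → T.degree u = 2) →
    (r.getVert 1 = s.getVert 1 ∨ T.degree a = 1) →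
    b₁ = b₂ := by
  intro n
  induction n with
  | zero =>
    intro a b₁ b₂ r s hlen _ _ _ _ hab _ _ _ _
    exact absurd (Walk.eq_of_length_eq_zero (Nat.le_zero.mp hlen)) hab
  | succ n ih =>
    intro a b₁ b₂ r s hlen hr hs hd1 hd2 hab1 hab2 hint1 hint2 hsnd
    cases r with
    | nil => exact absurd rfl hab1
    | @cons _ w _ hadj r₁ =>
      cases s with
      | nil => exact absurd rfl hab2
      | @cons _ w' _ hadj' s₁ =>
        have hww : w = w' := by
          rcases hsnd with h1 | h1
          · rwa [show (1:ℕ) = 0 + 1 from rfl, Walk.getVert_cons_succ r₁ hadj, Walk.getVert_cons_succ s₁ hadj', Walk.getVert_zero, Walk.getVert_zero] at h1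
          · exact deg_one_unique h1 hadj hadj'
        subst hww
        have hw_ne_a : w ≠ a := hadj.ne'
        have hwmem1 : w ∈ (Walk.cons hadj r₁).support := by
          simp [Walk.support_cons, Walk.start_mem_support]
        have hwmem2 : w ∈ (Walk.cons hadj' s₁).support := by
          simp [Walk.support_cons, Walk.start_mem_support]
        by_cases hwb1 : w = b₁
        · by_cases hwb2 : w = b₂
          · rw [← hwb1, hwb2]
          · have hdw := hint2 w hwmem2 hw_ne_a hwb2
            exact absurd (hwb1 ▸ hdw) hd1
        · by_cases hwb2 : w = b₂
          · have hdw := hint1 w hwmem1 hw_ne_a hwb1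
            exact absurd (hwb2 ▸ hdw) hd2
          · have hdw : T.degree w = 2 := hint1 w hwmem1 hw_ne_a hwb1
            have hr₁ : r₁.IsPath := hr.of_cons
            have hs₁ : s₁.IsPath := hs.of_cons
            have hanr : a ∉ r₁.support := ((Walk.cons_isPath_iff hadj r₁).mp hr).2
            have hans : a ∉ s₁.support := ((Walk.cons_isPath_iff hadj' s₁).mp hs).2
            have hlr : 0 < r₁.length := by
              rcases Nat.eq_zero_or_pos r₁.length with h0 | h
              · exact absurd (Walk.eq_of_length_eq_zero h0) hwb1
              · exact h
            have hls : 0 < s₁.length := by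
              rcases Nat.eq_zero_or_pos s₁.length with h0 | h
              · exact absurd (Walk.eq_of_length_eq_zero h0) hwb2
              · exact h
            have hx1 : T.Adj w (r₁.getVert 1) := by
              have := r₁.adj_getVert_succ (i := 0) hlr
              simpa using this
            have hy1 : T.Adj w (s₁.getVert 1) := by
              have := s₁.adj_getVert_succ (i := 0) hls
              simpa using this
            have hx1m : r₁.getVert 1 ∈ r₁.support :=
              Walk.mem_support_iff_exists_getVert.mpr ⟨1, rfl, hlr⟩
            have hy1m : s₁.getVert 1 ∈ s₁.support :=
              Walk.mem_support_iff_exists_getVert.mpr ⟨1, rfl, hls⟩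
            have hsnd' : r₁.getVert 1 = s₁.getVert 1 := by
              refine eq_of_card_two (t := T.neighborFinset w) (a := a) ?_ ?_ ?_ ?_ ?_ ?_
              · rw [SimpleGraph.card_neighborFinset_eq_degree]; exact hdw
              · exact (T.mem_neighborFinset w a).mpr hadj.symm
              · exact (T.mem_neighborFinset w _).mpr hx1
              · exact (T.mem_neighborFinset w _).mpr hy1
              · exact fun h => hanr (h ▸ hx1m)
              · exact fun h => hans (h ▸ hy1m)
            have hlen' : r₁.length ≤ n := by
              simp only [Walk.length_cons] at hlen; omega
            refine ih w b₁ b₂ r₁ s₁ hlen' hr₁ hs₁ hd1 hd2 hwb1 hwb2 ?_ ?_ (Or.inl hsnd')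
            · intro u hu hu1 hu2
              exact hint1 u (by simp [Walk.support_cons, hu]) (fun he => hanr (he ▸ hu)) hu2
            · intro u hu hu1 hu2
              exact hint2 u (by simp [Walk.support_cons, hu]) (fun he => hans (he ▸ hu)) hu2

/-- Two endpaths ending at the same leaf start at the same branch vertex. -/
lemma leaf_unique {v v' l : V} (p : T.Walk v l) (q : T.Walk v' l)
    (hdv : 3 ≤ T.degree v) (hdv' : 3 ≤ T.degree v')
    (hdl : T.degree l = 1)
    (hp : p.IsPath) (hq : q.IsPath)
    (hip : ∀ w ∈ p.support, w ≠ v → w ≠ l → T.degree w = 2)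
    (hiq : ∀ w ∈ q.support, w ≠ v' → w ≠ l → T.degree w = 2) : v = v' := by
  have hlv : l ≠ v := fun h => by rw [h] at hdl; omega
  have hlv' : l ≠ v' := fun h => by rw [h] at hdl; omega
  refine forced p.reverse.length l v v' p.reverse q.reverse le_rfl hp.reverse hq.reverse
    (by omega) (by omega) hlv hlv' ?_ ?_ (Or.inr hdl)
  · intro u hu h1 h2
    rw [Walk.support_reverse, List.mem_reverse] at hu
    exact hip u hu h2 h1
  · intro u hu h1 h2
    rw [Walk.support_reverse, List.mem_reverse] at hu
    exact hiq u hu h2 h1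

/-- A vertex on endpaths of two branch vertices forces them to coincide. -/
lemma endpath_support_unique {v v' l l' u : V}
    (p : T.Walk v l) (q : T.Walk v' l')
    (hdv : 3 ≤ T.degree v) (hdv' : 3 ≤ T.degree v')
    (hdl : T.degree l = 1) (hdl' : T.degree l' = 1)
    (hp : p.IsPath) (hq : q.IsPath)
    (hip : ∀ w ∈ p.support, w ≠ v → w ≠ l → T.degree w = 2)
    (hiq : ∀ w ∈ q.support, w ≠ v' → w ≠ l' → T.degree w = 2)
    (hu : u ∈ p.support) (hu' : u ∈ q.support) : v = v' := by
  by_contra hvv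
  have hvl' : v ≠ l' := fun h => by rw [h] at hdv; omega
  have hv'l : v' ≠ l := fun h => by rw [h] at hdv'; omega
  have huv : u ≠ v := by
    rintro rfl
    have := hiq u hu' hvv hvl'
    omega
  have huv' : u ≠ v' := by
    rintro rfl
    have := hip u hu (Ne.symm hvv) hv'l
    omega
  have hul : u ≠ l := by
    rintro rfl
    rcases eq_or_ne u l' with rfl | hll
    · exact hvv (leaf_unique p q hdv hdv' hdl hp hq hip hiq)
    · have := hiq u hu' huv' hll
      omega
  have hul' : u ≠ l' := by
    rintro rfl
    have := hip u hu huv hul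
    omega
  have hdu : T.degree u = 2 := hip u hu huv hul
  have hp1 : (p.takeUntil u hu).IsPath := hp.takeUntil hu
  have hp2 : (p.dropUntil u hu).IsPath := hp.dropUntil hu
  have hq1 : (q.takeUntil u hu').IsPath := hq.takeUntil hu'
  have hq2 : (q.dropUntil u hu').IsPath := hq.dropUntil hu'
  have hpnodup : ((p.takeUntil u hu).support ++ (p.dropUntil u hu).support.tail).Nodup := by
    rw [← Walk.support_append, p.take_spec hu]; exact hp.support_nodup
  have hqnodup : ((q.takeUntil u hu').support ++ (q.dropUntil u hu').support.tail).Nodup := by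
    rw [← Walk.support_append, q.take_spec hu']; exact hq.support_nodup
  have hexcl : ∀ w ∈ (p.dropUntil u hu).support, w ≠ u → w ∉ (p.takeUntil u hu).support := by
    intro w hw hwu hwmem
    have hw' : w ∈ (p.dropUntil u hu).support.tail := by
      rw [Walk.support_eq_cons (p.dropUntil u hu)] at hw
      rcases List.mem_cons.mp hw with rfl | h
      · exact absurd rfl hwu
      · exact h
    exact (List.disjoint_of_nodup_append hpnodup) hwmem hw'
  have hexcl' : ∀ w ∈ (q.dropUntil u hu').support, w ≠ u → w ∉ (q.takeUntil u hu').support := by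
    intro w hw hwu hwmem
    have hw' : w ∈ (q.dropUntil u hu').support.tail := by
      rw [Walk.support_eq_cons (q.dropUntil u hu')] at hw
      rcases List.mem_cons.mp hw with rfl | h
      · exact absurd rfl hwu
      · exact h
    exact (List.disjoint_of_nodup_append hqnodup) hwmem hw'
  -- interior conditions for the pieces
  have hintp2 : ∀ w ∈ (p.dropUntil u hu).support, w ≠ u → w ≠ l → T.degree w = 2 := by
    intro w hw hwu hwl
    have hwv : w ≠ v := by
      intro h
      exact hexcl w hw hwu (by rw [h]; exact Walk.start_mem_support _)
    exact hip w (Walk.support_dropUntil_subset p hu hw) hwv hwl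
  have hintq2 : ∀ w ∈ (q.dropUntil u hu').support, w ≠ u → w ≠ l' → T.degree w = 2 := by
    intro w hw hwu hwl
    have hwv : w ≠ v' := by
      intro h
      exact hexcl' w hw hwu (by rw [h]; exact Walk.start_mem_support _)
    exact hiq w (Walk.support_dropUntil_subset q hu' hw) hwv hwl
  have hlnotp1 : l ∉ (p.takeUntil u hu).support :=
    hexcl l (Walk.end_mem_support _) hul.symm
  have hintp1r : ∀ w ∈ (p.takeUntil u hu).reverse.support, w ≠ u → w ≠ v → T.degree w = 2 := by
    intro w hw hwu hwv
    rw [Walk.support_reverse, List.mem_reverse] at hw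
    have hwl : w ≠ l := fun h => hlnotp1 (h ▸ hw)
    exact hip w (Walk.support_takeUntil_subset p hu hw) hwv hwl
  -- lengths
  have hp2len : 0 < (p.dropUntil u hu).length := by
    rcases Nat.eq_zero_or_pos (p.dropUntil u hu).length with h0 | h
    · exact absurd (Walk.eq_of_length_eq_zero h0) hul
    · exact h
  have hq2len : 0 < (q.dropUntil u hu').length := by
    rcases Nat.eq_zero_or_pos (q.dropUntil u hu').length with h0 | h
    · exact absurd (Walk.eq_of_length_eq_zero h0) hul'
    · exact h
  have hp1rlen : 0 < (p.takeUntil u hu).reverse.length := by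
    rw [Walk.length_reverse]
    rcases Nat.eq_zero_or_pos (p.takeUntil u hu).length with h0 | h
    · exact absurd (Walk.eq_of_length_eq_zero h0) (Ne.symm huv)
    · exact h
  -- the three neighbours of u
  have hβadj : T.Adj u ((p.dropUntil u hu).getVert 1) := by
    have := (p.dropUntil u hu).adj_getVert_succ (i := 0) hp2len
    simpa using this
  have hγadj : T.Adj u ((q.dropUntil u hu').getVert 1) := by
    have := (q.dropUntil u hu').adj_getVert_succ (i := 0) hq2len
    simpa using this
  have hαadj : T.Adj u ((p.takeUntil u hu).reverse.getVert 1) := by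
    have := (p.takeUntil u hu).reverse.adj_getVert_succ (i := 0) hp1rlen
    simpa using this
  have hβmem : (p.dropUntil u hu).getVert 1 ∈ (p.dropUntil u hu).support :=
    Walk.mem_support_iff_exists_getVert.mpr ⟨1, rfl, hp2len⟩
  have hαmem : (p.takeUntil u hu).reverse.getVert 1 ∈ (p.takeUntil u hu).support := by
    have : (p.takeUntil u hu).reverse.getVert 1 ∈ (p.takeUntil u hu).reverse.support :=
      Walk.mem_support_iff_exists_getVert.mpr ⟨1, rfl, hp1rlen⟩
    rwa [Walk.support_reverse, List.mem_reverse] at this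
  have hαβ : (p.takeUntil u hu).reverse.getVert 1 ≠ (p.dropUntil u hu).getVert 1 := by
    intro h
    exact hexcl _ hβmem hβadj.ne' (h ▸ hαmem)
  have hγcases : (q.dropUntil u hu').getVert 1 = (p.takeUntil u hu).reverse.getVert 1 ∨
      (q.dropUntil u hu').getVert 1 = (p.dropUntil u hu).getVert 1 := by
    refine mem_of_card_two (t := T.neighborFinset u) ?_ ?_ ?_ hαβ ?_
    · rw [SimpleGraph.card_neighborFinset_eq_degree]; exact hdu
    · exact (T.mem_neighborFinset u _).mpr hαadj
    · exact (T.mem_neighborFinset u _).mpr hβadj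
    · exact (T.mem_neighborFinset u _).mpr hγadj
  rcases hγcases with hγα | hγβ
  · -- q₂ is forced back toward v, so l' = v : contradiction
    have : l' = v := by
      refine forced (q.dropUntil u hu').length u l' v (q.dropUntil u hu')
        (p.takeUntil u hu).reverse le_rfl hq2 hp1.reverse
        (by omega) (by omega) hul' huv ?_ ?_ (Or.inl hγα)
      · exact hintq2
      · exact hintp1r
    rw [this] at hdl'
    omega
  · -- q₂ is forced along p₂, so l = l' ; then leaf_unique gives v = v'
    have hll : l = l' := by
      refine (forced (p.dropUntil u hu).length u l l' (p.dropUntil u hu)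
        (q.dropUntil u hu') le_rfl hp2 hq2 (by omega) (by omega) hul hul' ?_ ?_
        (Or.inl hγβ.symm))
      · exact hintp2
      · exact hintq2
    subst hll
    exact hvv (leaf_unique p q hdv hdv' hdl hp hq hip hiq)

/-- Along a walk all of whose vertices are strictly covered, the covering
broadcast vertex cannot change. -/
lemma walk_interior {f : V → ℕ} (hc : T.Connected) (hf : BnIndep T f) (x : V) :
    ∀ {s t : V} (p : T.Walk s t), (∀ u ∈ p.support, ∃ y, T.dist u y < f y) →
      T.dist s x < f x → T.dist t x < f x := by
  intro s t p
  induction p with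
  | nil => exact fun _ h => h
  | @cons a b c h q ih =>
    intro hcov hs
    have hbs : T.dist b a ≤ 1 := by
      have := SimpleGraph.dist_le (Walk.cons h.symm (Walk.nil : T.Walk a a))
      simpa using this
    have htri := hc.dist_triangle (u := b) (v := a) (w := x)
    have hb_le : T.dist b x ≤ f x := by omega
    obtain ⟨y, hy⟩ := hcov b (by simp [Walk.support_cons])
    have hbx : T.dist b x < f x := by
      rcases eq_or_ne y x with rfl | hyx
      · exact hy
      · exfalso
        have hhx : Hears T f b x := ⟨by omega, hb_le⟩
        have hhy : Hears T f b y := ⟨by omega, le_of_lt hy⟩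
        have := hf.2 b y x hyx hhy hhx
        omega
    exact ih (fun u hu => hcov u (by simp [Walk.support_cons, hu])) hbx

lemma weight_bound (hT : T.IsTree) {f : V → ℕ} (hf : BnIndep T f) :
    bweight f + ((branchSet T) \ rset T).card ≤ Fintype.card V := by
  classical
  have hc : T.Connected := hT.isConnected
  -- geodesics witnessing the broadcast strengths
  have hgeo : ∀ x : V, ∃ (z : V) (p : T.Walk x z),
      p.length = T.dist x z ∧ (0 < f x → f x ≤ T.dist x z) := by
    intro x
    by_cases hx : 0 < f x
    · have hle : f x ≤ Finset.univ.sup (fun u => T.dist x u) := hf.1 x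
      obtain ⟨z, _, hz⟩ := (Finset.le_sup_iff hx).mp hle
      obtain ⟨p, hp⟩ := hc.exists_walk_length_eq_dist x z
      exact ⟨z, p, hp, fun _ => hz⟩
    · obtain ⟨p, hp⟩ := hc.exists_walk_length_eq_dist x x
      exact ⟨x, p, hp, fun h => absurd h hx⟩
  choose zf gf hg1 hg2 using hgeo
  -- disjointness of interiors
  have hdisj : ∀ {u x y : V}, T.dist u x < f x → T.dist u y < f y → x = y := by
    intro u x y hx hy
    by_contra hxy
    have h1 : Hears T f u x := ⟨by omega, le_of_lt hx⟩
    have h2 : Hears T f u y := ⟨by omega, le_of_lt hy⟩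
    have := hf.2 u x y hxy h1 h2
    omega
  have hfact1 : ∀ (x : V), 0 < f x → ∀ i : ℕ, i ≤ f x → T.dist x ((gf x).getVert i) = i := by
    intro x hx i hi
    refine dist_getVert_eq hc (gf x) (hg1 x) ?_
    rw [hg1 x]; exact le_trans hi (hg2 x hx)
  have hfact2 : ∀ (x : V), 0 < f x → ∀ i : ℕ, i < f x → T.dist ((gf x).getVert i) x < f x := by
    intro x hx i hi
    rw [SimpleGraph.dist_comm, hfact1 x hx i (le_of_lt hi)]; exact hi
  have hfact3 : ∀ (x : V), 0 < f x → ∀ i : ℕ, 0 < i → i < f x →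
      2 ≤ T.degree ((gf x).getVert i) := by
    intro x hx i h0 hi
    have hlen : i + 1 ≤ (gf x).length := by
      rw [hg1 x]; exact le_trans (Nat.succ_le_of_lt hi) (hg2 x hx)
    have ha1 : T.Adj ((gf x).getVert (i-1)) ((gf x).getVert i) := by
      have := (gf x).adj_getVert_succ (i := i - 1) (by omega)
      have h' : i - 1 + 1 = i := by omega
      rwa [h'] at this
    have ha2 : T.Adj ((gf x).getVert i) ((gf x).getVert (i+1)) :=
      (gf x).adj_getVert_succ (by omega)
    have hne : (gf x).getVert (i-1) ≠ (gf x).getVert (i+1) := by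
      intro h
      have d1 := hfact1 x hx (i-1) (by omega)
      have d2 : T.dist x ((gf x).getVert (i+1)) = i + 1 :=
        dist_getVert_eq hc (gf x) (hg1 x) hlen
      rw [h] at d1
      omega
    have h1 : (gf x).getVert (i-1) ∈ T.neighborFinset ((gf x).getVert i) :=
      (T.mem_neighborFinset _ _).mpr ha1.symm
    have h2 : (gf x).getVert (i+1) ∈ T.neighborFinset ((gf x).getVert i) :=
      (T.mem_neighborFinset _ _).mpr ha2
    have hlt := Finset.one_lt_card.mpr ⟨_, h1, _, h2, hne⟩
    rw [← SimpleGraph.card_neighborFinset_eq_degree]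
    omega
  -- choice of an extra vertex for each heavy branch vertex
  have hheavy : ∀ v : V, 3 ≤ T.degree v → 1 < (leafSet T v).card → ∃ u : V,
      ((∃ (l : V) (pw : T.Walk v l), T.degree l = 1 ∧ pw.IsPath ∧
        (∀ w ∈ pw.support, w ≠ v → w ≠ l → T.degree w = 2) ∧ u ∈ pw.support) ∧
        ∀ y, ¬ T.dist u y < f y)
      ∨ (T.degree u = 1 ∧ u ∈ leafSet T v ∧ ∃ x, T.dist u x < f x ∧ u ≠ x) := by
    intro v hdv hcard
    obtain ⟨l₁, hl₁, l₂, hl₂, hne⟩ := Finset.one_lt_card.mp hcard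
    have he₁ : IsEndpathTo T v l₁ := (Finset.mem_filter.mp hl₁).2
    have he₂ : IsEndpathTo T v l₂ := (Finset.mem_filter.mp hl₂).2
    obtain ⟨hdl₁, p₁, hp₁, hi₁⟩ := he₁
    obtain ⟨hdl₂, p₂, hp₂, hi₂⟩ := he₂
    by_cases hcov1 : ∀ u ∈ p₁.support, ∃ y, T.dist u y < f y
    · by_cases hcov2 : ∀ u ∈ p₂.support, ∃ y, T.dist u y < f y
      · obtain ⟨x₁, hx₁⟩ := hcov1 l₁ p₁.end_mem_support
        obtain ⟨x₂, hx₂⟩ := hcov2 l₂ p₂.end_mem_support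
        have hv₁ : T.dist v x₁ < f x₁ := by
          refine walk_interior hc hf x₁ p₁.reverse ?_ hx₁
          intro u hu
          rw [Walk.support_reverse, List.mem_reverse] at hu
          exact hcov1 u hu
        have hv₂ : T.dist v x₂ < f x₂ := by
          refine walk_interior hc hf x₂ p₂.reverse ?_ hx₂
          intro u hu
          rw [Walk.support_reverse, List.mem_reverse] at hu
          exact hcov2 u hu
        have hxx : x₁ = x₂ := hdisj hv₁ hv₂
        by_cases hlx : l₁ = x₁
        · refine ⟨l₂, Or.inr ⟨hdl₂, hl₂, x₂, hx₂, ?_⟩⟩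
          rw [← hxx, ← hlx]
          exact hne.symm
        · exact ⟨l₁, Or.inr ⟨hdl₁, hl₁, x₁, hx₁, hlx⟩⟩
      · push_neg at hcov2
        obtain ⟨u, hu, hnc⟩ := hcov2
        exact ⟨u, Or.inl ⟨⟨l₂, p₂, hdl₂, hp₂, hi₂, hu⟩, fun y => not_lt.mpr (hnc y)⟩⟩
    · push_neg at hcov1
      obtain ⟨u, hu, hnc⟩ := hcov1
      exact ⟨u, Or.inl ⟨⟨l₁, p₁, hdl₁, hp₁, hi₁, hu⟩, fun y => not_lt.mpr (hnc y)⟩⟩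
  set Hvy : Finset V := (branchSet T) \ rset T with hHvydef
  have hHvy : ∀ v : {v // v ∈ Hvy}, 3 ≤ T.degree v.1 ∧ 1 < (leafSet T v.1).card := by
    intro v
    have h2 : v.1 ∈ branchSet T \ rset T := v.2
    rw [Finset.mem_sdiff] at h2
    obtain ⟨hb, hnr⟩ := h2
    have hdeg : 3 ≤ T.degree v.1 := (Finset.mem_filter.mp hb).2
    refine ⟨hdeg, ?_⟩
    by_contra hle
    exact hnr (Finset.mem_filter.mpr ⟨hb, by omega⟩)
  have hchoice := fun v : {v // v ∈ Hvy} => hheavy v.1 (hHvy v).1 (hHvy v).2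
  choose S hS using hchoice
  let F : ((Σ x : {x : V // 0 < f x}, Fin (f x.1)) ⊕ {v // v ∈ Hvy}) → V :=
    Sum.elim (fun p => (gf p.1.1).getVert p.2.1) (fun v => S v)
  have hinj : Function.Injective F := by
    rintro (⟨x, i⟩ | v) (⟨y, j⟩ | w) heq
    · simp only [F, Sum.elim_inl] at heq
      rcases eq_or_ne x.1 y.1 with hxy | hxy
      · have hxsub : x = y := Subtype.ext hxy
        subst hxsub
        have d1 := hfact1 x.1 x.2 i.1 (le_of_lt i.2)
        have d2 := hfact1 x.1 x.2 j.1 (le_of_lt j.2)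
        rw [heq] at d1
        have hij : i = j := Fin.ext (by omega)
        rw [hij]
      · have h1 := hfact2 x.1 x.2 i.1 i.2
        have h2 := hfact2 y.1 y.2 j.1 j.2
        rw [heq] at h1
        exact absurd (hdisj h1 h2) hxy
    · simp only [F, Sum.elim_inl, Sum.elim_inr] at heq
      exfalso
      have hint : T.dist (S w) x.1 < f x.1 := heq ▸ hfact2 x.1 x.2 i.1 i.2
      rcases hS w with ⟨_, hunc⟩ | ⟨hdeg1, _, x', hx', hne'⟩
      · exact hunc x.1 hint
      · have hxx : x' = x.1 := hdisj hx' hint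
        have hi0 : i.1 ≠ 0 := by
          rintro h0
          apply hne'
          rw [hxx, ← heq, h0, Walk.getVert_zero]
        have hd2 := hfact3 x.1 x.2 i.1 (Nat.pos_of_ne_zero hi0) i.2
        rw [heq] at hd2
        omega
    · simp only [F, Sum.elim_inl, Sum.elim_inr] at heq
      exfalso
      have hint : T.dist (S v) y.1 < f y.1 := heq ▸ hfact2 y.1 y.2 j.1 j.2
      rcases hS v with ⟨_, hunc⟩ | ⟨hdeg1, _, x', hx', hne'⟩
      · exact hunc y.1 hint
      · have hxx : x' = y.1 := hdisj hx' hint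
        have hi0 : j.1 ≠ 0 := by
          rintro h0
          apply hne'
          rw [hxx, heq, h0, Walk.getVert_zero]
        have hd2 := hfact3 y.1 y.2 j.1 (Nat.pos_of_ne_zero hi0) j.2
        rw [← heq] at hd2
        omega
    · simp only [F, Sum.elim_inr] at heq
      have hveq : v.1 = w.1 := by
        rcases hS v with ⟨⟨l, pw, hdl, hpw, hiw, hmem⟩, hunc⟩ | ⟨hd1, hlf, x', hx', hne'⟩
        · rcases hS w with ⟨⟨l', qw, hdl', hqw, hiw', hmem'⟩, hunc'⟩ | ⟨hd1', hlf', x'', hx'', hne''⟩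
          · refine endpath_support_unique pw qw (hHvy v).1 (hHvy w).1 hdl hdl' hpw hqw
              hiw hiw' hmem ?_
            rw [heq]; exact hmem'
          · exfalso
            apply hunc x''
            rw [heq]; exact hx''
        · rcases hS w with ⟨⟨l', qw, hdl', hqw, hiw', hmem'⟩, hunc'⟩ | ⟨hd1', hlf', x'', hx'', hne''⟩
          · exfalso
            apply hunc' x'
            rw [← heq]; exact hx'
          · have h1 : IsEndpathTo T v.1 (S v) := (Finset.mem_filter.mp hlf).2
            have h2 : IsEndpathTo T w.1 (S v) := by
              rw [heq]; exact (Finset.mem_filter.mp hlf').2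
            obtain ⟨_, pv, hpv, hipv⟩ := h1
            obtain ⟨_, qv, hqv, hiqv⟩ := h2
            exact leaf_unique pv qv (hHvy v).1 (hHvy w).1 hd1 hpv hqv hipv hiqv
      exact congrArg Sum.inr (Subtype.ext hveq)
  have hcard := Fintype.card_le_of_injective F hinj
  rw [Fintype.card_sum, Fintype.card_sigma] at hcard
  simp only [Fintype.card_fin, Fintype.card_coe] at hcard
  have hsum : (∑ x : {x : V // 0 < f x}, f x.1) = bweight f := by
    rw [← Finset.sum_subtype (Finset.univ.filter fun x => 0 < f x) (by simp) f]
    rw [Finset.sum_filter_of_ne (fun x _ hx => Nat.pos_of_ne_zero hx)]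
    rfl
  rw [hsum] at hcard
  exact hcard

end BnAux


/-- For any tree `T` of order `n`, `α_bn(T) ≤ n - b(T) + ρ(T)`. -/
theorem stmt0 {V : Type*} [Fintype V] (T : SimpleGraph V) (hT : T.IsTree) :
    alphaBn T ≤ Fintype.card V - (branchSet T).card + (rset T).card := by
  refine csSup_le' ?_
  rintro w ⟨f, hf, rfl⟩
  have h1 := BnAux.weight_bound hT hf
  have hsub : rset T ⊆ branchSet T := Finset.filter_subset _ _
  have h2 : ((branchSet T) \ rset T).card = (branchSet T).card - (rset T).card :=
    Finset.card_sdiff_of_subset hsub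
  have h4 : (rset T).card ≤ (branchSet T).card := Finset.card_le_card hsub
  have h3 : (branchSet T).card ≤ Fintype.card V := by
    refine le_trans (Finset.card_filter_le _ _) ?_
    simp
  omega
end
end

section
/- For any connected graph G of order n and any spanning tree T of G, α_bn(G) ≤ α_bn(T) ≤ n − 1. -/
open SimpleGraph Finset
open scoped Classical

noncomputable section

/-- Realization of intermediate distances along a geodesic. -/
lemma bn_exists_dist_eq_aux {V : Type*} (G : SimpleGraph V) (hG : G.Connected) (v u : V) :
    ∀ k, k ≤ G.dist v u → ∃ w, G.dist v w = k ∧ G.dist w u = G.dist v u - k := by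
  intro k
  induction k with
  | zero => intro _; exact ⟨v, by simp⟩
  | succ k ih =>
    intro hk
    obtain ⟨w, hw1, hw2⟩ := ih (Nat.le_of_succ_le hk)
    have hwu : 0 < G.dist w u := by omega
    obtain ⟨p, hp⟩ := (hG w u).exists_walk_length_eq_dist
    cases p with
    | nil => simp at hp; omega
    | @cons _ w' _ hadj q =>
      refine ⟨w', ?_, ?_⟩
      · have h1 : G.dist v w' ≤ k + 1 := by
          calc G.dist v w' ≤ G.dist v w + G.dist w w' := hG.dist_triangle
            _ ≤ k + 1 := by
              have := G.dist_le (SimpleGraph.Walk.cons hadj SimpleGraph.Walk.nil)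
              simp at this; omega
        have h2 : G.dist w' u ≤ G.dist v u - (k + 1) := by
          have := G.dist_le q
          simp at hp
          omega
        have h3 : G.dist v u ≤ G.dist v w' + G.dist w' u := hG.dist_triangle
        omega
      · have h2 : G.dist w' u ≤ G.dist v u - (k + 1) := by
          have := G.dist_le q
          simp at hp
          omega
        have h1 : G.dist v w' ≤ k + 1 := by
          calc G.dist v w' ≤ G.dist v w + G.dist w w' := hG.dist_triangle
            _ ≤ k + 1 := by
              have := G.dist_le (SimpleGraph.Walk.cons hadj SimpleGraph.Walk.nil)
              simp at this; omega
        have h3 : G.dist v u ≤ G.dist v w' + G.dist w' u := hG.dist_triangle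
        omega

/-- In a connected graph, every value up to the eccentricity is a distance. -/
lemma bn_exists_dist_eq {V : Type*} [Fintype V] (G : SimpleGraph V) (hG : G.Connected)
    (v : V) (k : ℕ) (hk : k ≤ gecc G v) : ∃ w, G.dist v w = k := by
  have hne : (Finset.univ : Finset V).Nonempty := by
    have : Nonempty V := hG.nonempty
    exact Finset.univ_nonempty
  obtain ⟨u, _, hu⟩ := Finset.exists_mem_eq_sup Finset.univ hne fun u => G.dist v u
  have : k ≤ G.dist v u := by rw [gecc] at hk; omega
  obtain ⟨w, hw, -⟩ := bn_exists_dist_eq_aux G hG v u k this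
  exact ⟨w, hw⟩

/-- Any bn-independent broadcast on a connected graph has weight at most `n - 1`. -/
lemma bnIndep_weight_le {V : Type*} [Fintype V] (G : SimpleGraph V) (hG : G.Connected)
    (f : V → ℕ) (hf : BnIndep G f) : bweight f ≤ Fintype.card V - 1 := by
  by_cases hz : ∀ v, f v = 0
  · have : bweight f = 0 := by
      rw [bweight]; exact Finset.sum_eq_zero fun v _ => hz v
    omega
  push_neg at hz
  obtain ⟨v₀, hv₀⟩ := hz
  have hv₀' : 0 < f v₀ := Nat.pos_of_ne_zero hv₀
  classical
  set supp : Finset V := Finset.univ.filter fun v => 0 < f v with hsupp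
  set B : V → Finset V := fun v => Finset.univ.filter fun w => G.dist w v < f v with hB
  -- broadcasting vertices do not hear each other strictly: balls of radius f v - 1 disjoint
  have hdisj : ∀ v₁ ∈ supp, ∀ v₂ ∈ supp, v₁ ≠ v₂ → Disjoint (B v₁) (B v₂) := by
    intro v₁ h1 v₂ h2 hne
    rw [Finset.disjoint_left]
    intro w hw1 hw2
    simp only [hB, Finset.mem_filter] at hw1 hw2
    simp only [hsupp, Finset.mem_filter] at h1 h2
    have : G.dist w v₁ = f v₁ :=
      hf.2 w v₁ v₂ hne ⟨h1.2, le_of_lt hw1.2⟩ ⟨h2.2, le_of_lt hw2.2⟩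
    omega
  -- each ball has at least f v vertices
  have hcard : ∀ v ∈ supp, f v ≤ (B v).card := by
    intro v hv
    have hfv : f v ≤ gecc G v := hf.1 v
    have hget : ∀ i ∈ Finset.range (f v), ∃ w, G.dist v w = i := by
      intro i hi
      simp only [Finset.mem_range] at hi
      exact bn_exists_dist_eq G hG v i (by omega)
    choose g hg using hget
    calc f v = (Finset.range (f v)).card := (Finset.card_range _).symm
      _ ≤ (B v).card := by
        apply Finset.card_le_card_of_injOn (fun i => if h : i ∈ Finset.range (f v) then g i h else v)
        · intro i hi
          rw [Finset.mem_coe] at hi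
          simp only [hi, dif_pos, hB, Finset.mem_coe, Finset.mem_filter, Finset.mem_univ, true_and]
          rw [SimpleGraph.dist_comm, hg i hi]
          simpa using hi
        · intro i hi j hj hij
          simp only [Finset.mem_coe] at hi hj
          simp only [hi, hj, dif_pos] at hij
          have : G.dist v (g i hi) = G.dist v (g j hj) := by rw [hij]
          rw [hg i hi, hg j hj] at this
          exact this
  -- a boundary vertex of v₀ lies in no ball
  obtain ⟨b, hb⟩ := bn_exists_dist_eq G hG v₀ (f v₀) (hf.1 v₀)
  have hbnot : ∀ v ∈ supp, b ∉ B v := by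
    intro v hv hbv
    simp only [hB, Finset.mem_filter] at hbv
    simp only [hsupp, Finset.mem_filter] at hv
    by_cases hvv : v = v₀
    · subst hvv; rw [SimpleGraph.dist_comm] at hbv; omega
    · have : G.dist b v = f v :=
        hf.2 b v v₀ hvv ⟨hv.2, le_of_lt hbv.2⟩ ⟨hv₀', by rw [SimpleGraph.dist_comm]; omega⟩
      omega
  -- counting
  have hsum : bweight f = ∑ v ∈ supp, f v := by
    rw [bweight]
    symm
    apply Finset.sum_subset (Finset.subset_univ _)
    intro v _ hv
    simp only [hsupp, Finset.mem_filter, Finset.mem_univ, true_and] at hv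
    omega
  have hunion : (supp.biUnion B).card = ∑ v ∈ supp, (B v).card :=
    Finset.card_biUnion hdisj
  have hsub : supp.biUnion B ⊆ Finset.univ.erase b := by
    intro w hw
    simp only [Finset.mem_biUnion] at hw
    obtain ⟨v, hv, hwv⟩ := hw
    refine Finset.mem_erase.mpr ⟨?_, Finset.mem_univ w⟩
    rintro rfl
    exact hbnot v hv hwv
  have hcard2 : (Finset.univ.erase b).card = Fintype.card V - 1 := by
    rw [Finset.card_erase_of_mem (Finset.mem_univ b), Finset.card_univ]
  calc bweight f = ∑ v ∈ supp, f v := hsum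
    _ ≤ ∑ v ∈ supp, (B v).card := Finset.sum_le_sum hcard
    _ = (supp.biUnion B).card := hunion.symm
    _ ≤ (Finset.univ.erase b).card := Finset.card_le_card hsub
    _ = Fintype.card V - 1 := hcard2

/-- A bn-independent broadcast on `G` is bn-independent on a spanning tree `T`. -/
lemma bnIndep_of_le {V : Type*} [Fintype V] (G T : SimpleGraph V) (hT : T.Connected)
    (hle : T ≤ G) (f : V → ℕ) (hf : BnIndep G f) : BnIndep T f := by
  have hdist : ∀ u v : V, G.dist u v ≤ T.dist u v := fun u v =>
    SimpleGraph.Reachable.dist_anti hle (hT u v)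
  constructor
  · intro v
    calc f v ≤ gecc G v := hf.1 v
      _ ≤ gecc T v := Finset.sup_mono_fun fun u _ => hdist v u
  · intro w v₁ v₂ hne h1 h2
    have hG1 : Hears G f w v₁ := ⟨h1.1, le_trans (hdist w v₁) h1.2⟩
    have hG2 : Hears G f w v₂ := ⟨h2.1, le_trans (hdist w v₂) h2.2⟩
    have := hf.2 w v₁ v₂ hne hG1 hG2
    have h3 := hdist w v₁
    have h4 := h1.2
    omega

/-- For any connected graph `G` of order `n` and spanning tree `T` of `G`,
`α_bn(G) ≤ α_bn(T) ≤ n - 1`. -/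
theorem stmt3 {V : Type*} [Fintype V] (G T : SimpleGraph V) (hG : G.Connected)
    (hT : T.IsTree) (hle : T ≤ G) :
    alphaBn G ≤ alphaBn T ∧ alphaBn T ≤ Fintype.card V - 1 := by
  have hTc : T.Connected := hT.isConnected
  have hzero : BnIndep T (fun _ => 0) :=
    ⟨fun v => Nat.zero_le _, fun w v₁ v₂ _ h1 _ => absurd h1.1 (by simp)⟩
  have hneT : {w | ∃ f, BnIndep T f ∧ bweight f = w}.Nonempty :=
    ⟨bweight (fun _ => 0), fun _ => 0, hzero, rfl⟩
  have hub : ∀ w ∈ {w | ∃ f, BnIndep T f ∧ bweight f = w}, w ≤ Fintype.card V - 1 := by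
    rintro w ⟨f, hf, rfl⟩
    exact bnIndep_weight_le T hTc f hf
  have hbdd : BddAbove {w | ∃ f, BnIndep T f ∧ bweight f = w} :=
    ⟨Fintype.card V - 1, hub⟩
  constructor
  · apply csSup_le_csSup hbdd
    · have hzeroG : BnIndep G (fun _ => 0) :=
        ⟨fun v => Nat.zero_le _, fun w v₁ v₂ _ h1 _ => absurd h1.1 (by simp)⟩
      exact ⟨bweight (fun _ => 0), fun _ => 0, hzeroG, rfl⟩
    · rintro w ⟨f, hf, rfl⟩
      exact ⟨f, bnIndep_of_le G T hTc hle f hf, rfl⟩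
  · exact csSup_le hneT hub
end
end

section
/- For a connected graph G of order n, α_bn(G) = n − 1 if and only if G is a path or a generalized spider. -/
open SimpleGraph Finset
open scoped Classical

noncomputable section

/-- A path graph: a tree with maximum degree at most 2. -/
def IsPathGraph {V : Type*} (G : SimpleGraph V) [Fintype V] : Prop :=
  G.IsTree ∧ ∀ v, G.degree v ≤ 2

/-- A generalized spider: a tree with exactly one vertex of degree at least 3. -/
def IsGenSpider {V : Type*} (G : SimpleGraph V) [Fintype V] : Prop :=
  G.IsTree ∧ ∃! b, 3 ≤ G.degree b

section AuxA
variable {V : Type*} [Fintype V] {G : SimpleGraph V}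

omit [Fintype V] in
lemma edge_getVert_mem {u v : V} (p : G.Walk u v) {i : ℕ} (hi : i < p.length) :
    s(p.getVert i, p.getVert (i+1)) ∈ p.edges := by
  induction p generalizing i with
  | nil => simp at hi
  | @cons a b c hadj q ih =>
    cases i with
    | zero =>
      have h1 : (SimpleGraph.Walk.cons hadj q).getVert 1 = b := (q.getVert_cons_succ hadj (n := 0)).trans q.getVert_zero
      have h0 : (SimpleGraph.Walk.cons hadj q).getVert 0 = a := SimpleGraph.Walk.getVert_zero _
      rw [h0, h1, SimpleGraph.Walk.edges_cons]
      exact List.mem_cons_self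
    | succ i =>
      rw [SimpleGraph.Walk.getVert_cons_succ, SimpleGraph.Walk.getVert_cons_succ,
        SimpleGraph.Walk.edges_cons]
      exact List.mem_cons_of_mem _ (ih (by simpa using hi))

omit [Fintype V] in
lemma acyclic_of_rank (par : V → V) (r : V → ℕ)
    (h : ∀ a b, G.Adj a b → (par a = b ∧ r b < r a) ∨ (par b = a ∧ r a < r b)) :
    G.IsAcyclic := by
  have key : ∀ (w : V) (c₂ : G.Walk w w), c₂.IsCycle → (∀ x ∈ c₂.support, r x ≤ r w) → False := by
    intro w c₂ hc₂ hmax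
    cases c₂ with
    | nil => exact SimpleGraph.Walk.IsCycle.not_of_nil hc₂
    | @cons _ a _ hadj q =>
      have h3 : 3 ≤ (SimpleGraph.Walk.cons hadj q).length := hc₂.three_le_length
      rw [SimpleGraph.Walk.length_cons] at h3
      rw [SimpleGraph.Walk.cons_isCycle_iff] at hc₂
      obtain ⟨hqpath, hedge⟩ := hc₂
      set b := q.getVert (q.length - 1) with hbdef
      have hadjb : G.Adj b w := by
        have := q.adj_getVert_succ (i := q.length - 1) (by omega)
        rw [(by omega : q.length - 1 + 1 = q.length), q.getVert_length] at this
        exact this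
      have hra : r a ≤ r w := hmax a (by simp)
      have hrb : r b ≤ r w := by
        refine hmax b ?_
        rw [SimpleGraph.Walk.support_cons]
        refine List.mem_cons_of_mem _ ?_
        exact SimpleGraph.Walk.mem_support_iff_exists_getVert.mpr ⟨q.length - 1, rfl, by omega⟩
      have h1 : par w = a := by
        rcases h w a hadj with ⟨h1, _⟩ | ⟨_, h2⟩
        · exact h1
        · omega
      have h2 : par w = b := by
        rcases h b w hadjb with ⟨_, h2'⟩ | ⟨h1', _⟩
        · omega
        · exact h1'
      have hab : a = b := by rw [← h1, h2]
      apply hedge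
      have hmem : s(b, w) ∈ q.edges := by
        have := edge_getVert_mem q (i := q.length - 1) (by omega)
        rwa [(by omega : q.length - 1 + 1 = q.length), q.getVert_length] at this
      have heq : s(w, a) = s(b, w) := by rw [hab, Sym2.eq_swap]
      rw [heq]
      exact hmem
  intro v c hc
  have hsne : c.support.toFinset.Nonempty := ⟨v, by simp⟩
  obtain ⟨w, hwmem, hwmax⟩ := Finset.exists_max_image c.support.toFinset r hsne
  rw [List.mem_toFinset] at hwmem
  refine key w (c.rotate w hwmem) (hc.rotate hwmem) ?_
  intro x hx
  rw [SimpleGraph.Walk.support_eq_cons, List.mem_cons] at hx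
  rcases hx with rfl | hx
  · exact le_refl _
  · have hperm := SimpleGraph.Walk.support_rotate c w hwmem
    have hx2 : x ∈ c.support.tail := hperm.mem_iff.mp hx
    have : x ∈ c.support := by
      rw [SimpleGraph.Walk.support_eq_cons c]
      exact List.mem_cons_of_mem _ hx2
    exact hwmax x (List.mem_toFinset.mpr this)

end AuxA
section AuxB
variable {V : Type*} [Fintype V] {G : SimpleGraph V}

omit [Fintype V] in
lemma dist_le_getVert (hc : G.Connected) {u v : V} (p : G.Walk u v) (i : ℕ) :
    G.dist u (p.getVert i) ≤ i := by
  induction i with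
  | zero => simp [SimpleGraph.Walk.getVert_zero]
  | succ i ih =>
    rcases le_or_gt p.length i with h | h
    · rw [p.getVert_of_length_le (by omega)]
      have h1 := SimpleGraph.dist_le p
      have h3 : G.dist u (p.getVert i) ≤ i := ih
      rw [p.getVert_of_length_le h] at h3
      omega
    · have hadj := p.adj_getVert_succ h
      have h1 : G.dist (p.getVert i) (p.getVert (i+1)) = 1 :=
        SimpleGraph.dist_eq_one_iff_adj.mpr hadj
      have h2 := hc.dist_triangle (u := u) (v := p.getVert i) (w := p.getVert (i+1))
      omega

omit [Fintype V] in
/-- On a geodesic walk, the vertex at index `i` is at distance exactly `i` from the start. -/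
lemma dist_getVert (hc : G.Connected) {u v : V} (p : G.Walk u v)
    (hp : p.length = G.dist u v) {i : ℕ} (hi : i ≤ p.length) :
    G.dist u (p.getVert i) = i := by
  have h1 : G.dist u (p.getVert i) ≤ i := dist_le_getVert hc p i
  have h2 : G.dist (p.getVert i) v ≤ p.length - i := by
    have hrl := dist_le_getVert hc p.reverse (p.length - i)
    rw [SimpleGraph.Walk.getVert_reverse] at hrl
    rw [(by omega : p.length - (p.length - i) = i)] at hrl
    rw [SimpleGraph.dist_comm]
    simpa using hrl
  have h3 := hc.dist_triangle (u := u) (v := p.getVert i) (w := v)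
  omega

lemma exists_geodesic_ecc (hc : G.Connected) (v : V) :
    ∃ (u : V) (p : G.Walk v u), p.IsPath ∧ p.length = G.dist v u ∧ G.dist v u = gecc G v := by
  have hne : Nonempty V := hc.nonempty
  obtain ⟨u, -, hu⟩ := Finset.exists_mem_eq_sup Finset.univ univ_nonempty (fun u => G.dist v u)
  obtain ⟨p, hp, hl⟩ := hc.exists_path_of_dist v u
  exact ⟨u, p, hp, hl, hu.symm⟩

omit [Fintype V] in
/-- In a tree, every path realizes the distance. -/
lemma tree_path_length (hT : G.IsTree) {u v : V} (p : G.Walk u v) (hp : p.IsPath) :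
    p.length = G.dist u v := by
  obtain ⟨g, hg, hgl⟩ := hT.isConnected.exists_path_of_dist u v
  have : (⟨p, hp⟩ : G.Path u v) = ⟨g, hg⟩ := hT.IsAcyclic.path_unique _ _
  have hpg : p = g := congrArg Subtype.val this
  rw [hpg]; exact hgl

end AuxB
section AuxC
variable {V : Type*} [Fintype V] {G : SimpleGraph V}

lemma exists_geo_family (hc : G.Connected) {f : V → ℕ} (hb : IsBroadcast G f) :
    ∃ P : V → ℕ → V, ∀ v, P v 0 = v ∧ (∀ i, i ≤ f v → G.dist v (P v i) = i) ∧
      (∀ i, i < f v → G.Adj (P v i) (P v (i+1))) := by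
  have H : ∀ v : V, ∃ g : ℕ → V, g 0 = v ∧ (∀ i, i ≤ f v → G.dist v (g i) = i) ∧
      (∀ i, i < f v → G.Adj (g i) (g (i+1))) := by
    intro v
    obtain ⟨u, p, hp, hl, he⟩ := exists_geodesic_ecc hc v
    have hfv : f v ≤ p.length := by rw [hl, he]; exact hb v
    exact ⟨fun i => p.getVert i, p.getVert_zero,
      fun i hi => dist_getVert hc p hl (le_trans hi hfv),
      fun i hi => p.adj_getVert_succ (lt_of_lt_of_le hi hfv)⟩
  choose P h1 h2 h3 using H
  exact ⟨P, fun v => ⟨h1 v, h2 v, h3 v⟩⟩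

omit [Fintype V] in
lemma bn_hears_of_le {f : V → ℕ} {x v : V} (hv : 0 < f v) (hd : G.dist v x ≤ f v) :
    Hears G f x v := ⟨hv, by rwa [SimpleGraph.dist_comm]⟩

/-- Strict-interior injectivity: the map `(v, i) ↦ P v i` for `i < f v` is injective,
and never hits an endpoint `P w (f w)`. -/
lemma bn_inj {f : V → ℕ} (hf : BnIndep G f)
    {P : V → ℕ → V} (hP : ∀ v, ∀ i, i ≤ f v → G.dist v (P v i) = i) :
    (∀ v w i j, 0 < f v → 0 < f w → i < f v → j < f w → P v i = P w j → v = w ∧ i = j) ∧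
    (∀ v w i, 0 < f v → 0 < f w → i < f v → P v i ≠ P w (f w)) := by
  constructor
  · intro v w i j hv hw hi hj heq
    by_cases hvw : v = w
    · subst hvw
      refine ⟨rfl, ?_⟩
      have h1 := hP v i (le_of_lt hi)
      have h2 := hP v j (le_of_lt hj)
      rw [heq] at h1; omega
    · exfalso
      have hx1 : Hears G f (P v i) v := bn_hears_of_le hv (by rw [hP v i (le_of_lt hi)]; omega)
      have hx2 : Hears G f (P v i) w := by
        refine bn_hears_of_le hw ?_
        rw [heq, hP w j (le_of_lt hj)]; omega
      have := hf.2 (P v i) v w hvw hx1 hx2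
      rw [SimpleGraph.dist_comm, hP v i (le_of_lt hi)] at this
      omega
  · intro v w i hv hw hi heq
    by_cases hvw : v = w
    · subst hvw
      have h1 := hP v i (le_of_lt hi)
      have h2 := hP v (f v) (le_refl _)
      rw [heq] at h1; omega
    · have hx1 : Hears G f (P v i) v := bn_hears_of_le hv (by rw [hP v i (le_of_lt hi)]; omega)
      have hx2 : Hears G f (P v i) w := by
        refine bn_hears_of_le hw ?_
        rw [heq, hP w (f w) (le_refl _)]
      have := hf.2 (P v i) v w hvw hx1 hx2
      rw [SimpleGraph.dist_comm, hP v i (le_of_lt hi)] at this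
      omega

lemma bn_weight_le (hc : G.Connected) {f : V → ℕ} (hf : BnIndep G f) :
    bweight f ≤ Fintype.card V - 1 := by
  by_cases hall : ∀ v, f v = 0
  · have : bweight f = 0 := by simp [bweight, hall]
    omega
  push_neg at hall
  obtain ⟨v₀, hv₀⟩ := hall
  have hv₀' : 0 < f v₀ := Nat.pos_of_ne_zero hv₀
  obtain ⟨P, hPfam⟩ := exists_geo_family hc hf.1
  have hPd : ∀ v, ∀ i, i ≤ f v → G.dist v (P v i) = i := fun v => (hPfam v).2.1
  obtain ⟨hinj, hne⟩ := bn_inj hf hPd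
  classical
  set B : Finset V := Finset.univ.filter (fun v => 0 < f v) with hB
  set S : Finset ((_ : V) × ℕ) := B.sigma (fun v => Finset.range (f v)) with hS
  set e : V := P v₀ (f v₀) with he
  have hmaps : ∀ s ∈ S, P s.1 s.2 ∈ Finset.univ.erase e := by
    rintro ⟨v, i⟩ hs
    rw [hS, Finset.mem_sigma, hB, Finset.mem_filter, Finset.mem_range] at hs
    refine Finset.mem_erase.mpr ⟨hne v v₀ i hs.1.2 hv₀' hs.2, Finset.mem_univ _⟩
  have hinjOn : Set.InjOn (fun s : (_ : V) × ℕ => P s.1 s.2) S := by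
    rintro ⟨v, i⟩ hvs ⟨w, j⟩ hws heq
    rw [Finset.mem_coe] at hvs hws
    rw [hS, Finset.mem_sigma, hB, Finset.mem_filter, Finset.mem_range] at hvs hws
    obtain ⟨rfl, rfl⟩ := hinj v w i j hvs.1.2 hws.1.2 hvs.2 hws.2 heq
    rfl
  have hcard := Finset.card_le_card_of_injOn _ hmaps hinjOn
  have hcS : S.card = bweight f := by
    rw [hS, Finset.card_sigma]
    simp only [Finset.card_range]
    rw [hB, bweight]
    exact Finset.sum_filter_of_ne (fun x _ hx => Nat.pos_of_ne_zero hx)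
  have hce : (Finset.univ.erase e).card = Fintype.card V - 1 := by
    rw [Finset.card_erase_of_mem (Finset.mem_univ _), Finset.card_univ]
  omega

end AuxC
section AuxD
variable {V : Type*} [Fintype V] {G : SimpleGraph V}

lemma bn_structure (hc : G.Connected) {f : V → ℕ} (hf : BnIndep G f)
    (hw : bweight f = Fintype.card V - 1) : IsPathGraph G ∨ IsGenSpider G := by
  classical
  have hne : Nonempty V := hc.nonempty
  have hcard1 : 1 ≤ Fintype.card V := Fintype.card_pos
  rcases Nat.lt_or_ge (Fintype.card V) 2 with hn1 | hn2
  · -- single vertex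
    have hsub : Subsingleton V := Fintype.card_le_one_iff_subsingleton.mp (by omega)
    have hGbot : G = ⊥ := by
      ext a b
      simp only [SimpleGraph.bot_adj, iff_false]
      intro h
      exact h.ne (Subsingleton.elim a b)
    left
    refine ⟨⟨hc, ?_⟩, ?_⟩
    · rw [hGbot]; exact SimpleGraph.isAcyclic_bot
    · intro v
      have h2 := G.degree_lt_card_verts v
      omega
  -- main case
  have hwpos : 1 ≤ bweight f := by omega
  have hex : ∃ v, 0 < f v := by
    by_contra hno
    push_neg at hno
    have : bweight f = 0 := by
      simp only [bweight]
      exact Finset.sum_eq_zero (fun v _ => Nat.le_zero.mp (hno v))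
    omega
  obtain ⟨v₀, hv₀⟩ := hex
  obtain ⟨P, hPfam⟩ := exists_geo_family hc hf.1
  have hPd : ∀ v, ∀ i, i ≤ f v → G.dist v (P v i) = i := fun v => (hPfam v).2.1
  have hPadj : ∀ v, ∀ i, i < f v → G.Adj (P v i) (P v (i+1)) := fun v => (hPfam v).2.2
  obtain ⟨hinj, hnotend⟩ := bn_inj hf hPd
  set B : Finset V := Finset.univ.filter (fun v => 0 < f v) with hB
  set S : Finset ((_ : V) × ℕ) := B.sigma (fun v => Finset.range (f v)) with hS
  set e : V := P v₀ (f v₀) with he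
  have hmemS : ∀ v i, (⟨v, i⟩ : (_ : V) × ℕ) ∈ S ↔ 0 < f v ∧ i < f v := by
    intro v i
    rw [hS, Finset.mem_sigma, hB, Finset.mem_filter, Finset.mem_range]
    simp only [Finset.mem_univ, true_and]
  have hcS : S.card = Fintype.card V - 1 := by
    rw [hS, Finset.card_sigma]
    simp only [Finset.card_range]
    rw [hB, ← hw, bweight]
    exact Finset.sum_filter_of_ne (fun x _ hx => Nat.pos_of_ne_zero hx)
  -- all endpoints are equal to `e`
  have hend : ∀ w, 0 < f w → P w (f w) = e := by
    intro w hwpos'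
    by_contra hnee
    have hmaps : ∀ s ∈ S, P s.1 s.2 ∈ (Finset.univ.erase e).erase (P w (f w)) := by
      rintro ⟨v, i⟩ hs
      rw [hmemS] at hs
      refine Finset.mem_erase.mpr ⟨hnotend v w i hs.1 hwpos' hs.2, Finset.mem_erase.mpr
        ⟨hnotend v v₀ i hs.1 hv₀ hs.2, Finset.mem_univ _⟩⟩
    have hinjOn : Set.InjOn (fun s : (_ : V) × ℕ => P s.1 s.2) S := by
      rintro ⟨v, i⟩ hvs ⟨u, j⟩ hus heq
      rw [Finset.mem_coe, hmemS] at hvs hus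
      obtain ⟨rfl, rfl⟩ := hinj v u i j hvs.1 hus.1 hvs.2 hus.2 heq
      rfl
    have hle := Finset.card_le_card_of_injOn _ hmaps hinjOn
    have h1 : ((Finset.univ.erase e).erase (P w (f w))).card = Fintype.card V - 2 := by
      rw [Finset.card_erase_of_mem (Finset.mem_erase.mpr ⟨hnee, Finset.mem_univ _⟩),
        Finset.card_erase_of_mem (Finset.mem_univ _), Finset.card_univ]
      omega
    omega
  -- surjectivity onto `univ.erase e`
  have hrep : ∀ x : V, x ≠ e → ∃ v i, 0 < f v ∧ i < f v ∧ P v i = x := by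
    intro x hx
    by_contra hno
    push_neg at hno
    have hmaps : ∀ s ∈ S, P s.1 s.2 ∈ (Finset.univ.erase e).erase x := by
      rintro ⟨v, i⟩ hs
      rw [hmemS] at hs
      refine Finset.mem_erase.mpr ⟨?_, Finset.mem_erase.mpr
        ⟨hnotend v v₀ i hs.1 hv₀ hs.2, Finset.mem_univ _⟩⟩
      intro hPx
      exact (hno v i hs.1 hs.2) hPx
    have hinjOn : Set.InjOn (fun s : (_ : V) × ℕ => P s.1 s.2) S := by
      rintro ⟨v, i⟩ hvs ⟨u, j⟩ hus heq
      rw [Finset.mem_coe, hmemS] at hvs hus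
      obtain ⟨rfl, rfl⟩ := hinj v u i j hvs.1 hus.1 hvs.2 hus.2 heq
      rfl
    have hle := Finset.card_le_card_of_injOn _ hmaps hinjOn
    have h1 : ((Finset.univ.erase e).erase x).card = Fintype.card V - 2 := by
      rw [Finset.card_erase_of_mem (Finset.mem_erase.mpr ⟨hx, Finset.mem_univ _⟩),
        Finset.card_erase_of_mem (Finset.mem_univ _), Finset.card_univ]
      omega
    omega
  -- interior points are distinct from e
  have hinterior_ne : ∀ v i, 0 < f v → i < f v → P v i ≠ e := by
    intro v i hv hi
    rw [← hend v hv]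
    intro hcon
    have := hPd v i (le_of_lt hi)
    rw [hcon, hPd v (f v) (le_refl _)] at this
    omega
  -- distance from broadcaster to e
  have hdist_e : ∀ v, 0 < f v → G.dist v e = f v := by
    intro v hv
    rw [← hend v hv]
    exact hPd v (f v) (le_refl _)
  -- edge classification
  have hS1 : ∀ a b, G.Adj a b → ∃ v t, 0 < f v ∧ t < f v ∧
      ((a = P v t ∧ b = P v (t+1)) ∨ (b = P v t ∧ a = P v (t+1))) := by
    have hhalf : ∀ a b, G.Adj a b → a ≠ e → b = e → ∃ v t, 0 < f v ∧ t < f v ∧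
        ((a = P v t ∧ b = P v (t+1)) ∨ (b = P v t ∧ a = P v (t+1))) := by
      intro a b hab ha hb
      obtain ⟨v, p, hv, hp, hPa⟩ := hrep a ha
      have hda : G.dist v a = p := by rw [← hPa]; exact hPd v p (le_of_lt hp)
      have hdab : G.dist a b = 1 := SimpleGraph.dist_eq_one_iff_adj.mpr hab
      have htri : G.dist v b ≤ G.dist v a + G.dist a b := hc.dist_triangle
      have hdb : G.dist v b = f v := by rw [hb]; exact hdist_e v hv
      have hpval : p = f v - 1 := by omega
      refine ⟨v, p, hv, hp, Or.inl ⟨hPa.symm, ?_⟩⟩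
      rw [hb, ← hend v hv]
      congr 1
      omega
    intro a b hab
    by_cases ha : a = e
    · by_cases hb : b = e
      · exact absurd (ha.trans hb.symm) hab.ne
      · obtain ⟨v, t, h1, h2, h3⟩ := hhalf b a hab.symm hb ha
        exact ⟨v, t, h1, h2, h3.symm⟩
    · by_cases hb : b = e
      · exact hhalf a b hab ha hb
      · obtain ⟨v, p, hv, hp, hPa⟩ := hrep a ha
        obtain ⟨w, q, hwp, hq, hPb⟩ := hrep b hb
        have hda : G.dist v a = p := by rw [← hPa]; exact hPd v p (le_of_lt hp)
        have hdb : G.dist w b = q := by rw [← hPb]; exact hPd w q (le_of_lt hq)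
        have hdab : G.dist a b = 1 := SimpleGraph.dist_eq_one_iff_adj.mpr hab
        have hvw : v = w := by
          by_contra hvw
          have hx1 : Hears G f a v := bn_hears_of_le hv (by omega)
          have hx2 : Hears G f a w := by
            refine bn_hears_of_le hwp ?_
            have : G.dist w a ≤ G.dist w b + G.dist b a := hc.dist_triangle
            rw [SimpleGraph.dist_comm (u := b) (v := a)] at this
            omega
          have := hf.2 a v w hvw hx1 hx2
          rw [SimpleGraph.dist_comm] at this
          omega
        subst hvw
        have hpq : p ≠ q := fun hpq => hab.ne (by rw [← hPa, hpq, hPb])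
        have htri1 : G.dist v b ≤ G.dist v a + G.dist a b := hc.dist_triangle
        have htri2 : G.dist v a ≤ G.dist v b + G.dist b a := hc.dist_triangle
        rw [SimpleGraph.dist_comm (u := b) (v := a)] at htri2
        rcases Nat.lt_or_ge p q with hlt | hge
        · have : q = p + 1 := by omega
          subst this
          exact ⟨v, p, hv, by omega, Or.inl ⟨hPa.symm, hPb.symm⟩⟩
        · have : p = q + 1 := by omega
          subst this
          exact ⟨v, q, hv, by omega, Or.inr ⟨hPb.symm, hPa.symm⟩⟩
  -- choose representation functions
  have hrepc : ∀ x : V, ∃ vi : V × ℕ, x ≠ e → (0 < f vi.1 ∧ vi.2 < f vi.1 ∧ P vi.1 vi.2 = x) := by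
    intro x
    by_cases hx : x = e
    · exact ⟨(v₀, 0), fun h => absurd hx h⟩
    · obtain ⟨v, i, h1, h2, h3⟩ := hrep x hx
      exact ⟨(v, i), fun _ => ⟨h1, h2, h3⟩⟩
  choose rep hrepP using hrepc
  set r : V → ℕ := fun x => if x = e then 0 else f (rep x).1 - (rep x).2 with hr
  set par : V → V := fun x => if x = e then e else P (rep x).1 ((rep x).2 + 1) with hpar
  have hrepval : ∀ v t, 0 < f v → t < f v → (rep (P v t)).1 = v ∧ (rep (P v t)).2 = t := by
    intro v t hv ht
    have hxne := hinterior_ne v t hv ht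
    obtain ⟨h1, h2, h3⟩ := hrepP (P v t) hxne
    exact hinj _ v _ t h1 hv h2 ht h3
  have hrank : ∀ a b, G.Adj a b → (par a = b ∧ r b < r a) ∨ (par b = a ∧ r a < r b) := by
    have hkey : ∀ v t, 0 < f v → t < f v →
        par (P v t) = P v (t+1) ∧ r (P v (t+1)) < r (P v t) := by
      intro v t hv ht
      have hane := hinterior_ne v t hv ht
      obtain ⟨h1, h2⟩ := hrepval v t hv ht
      have hra : r (P v t) = f v - t := by rw [hr]; simp only [if_neg hane, h1, h2]
      have hpa : par (P v t) = P v (t+1) := by rw [hpar]; simp only [if_neg hane, h1, h2]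
      refine ⟨hpa, ?_⟩
      by_cases hbe : t + 1 = f v
      · have heb : P v (t+1) = e := by rw [hbe]; exact hend v hv
        have hre : r (P v (t+1)) = 0 := by rw [heb, hr]; simp
        rw [hre, hra]; omega
      · have hblt : t + 1 < f v := by omega
        have hbne := hinterior_ne v (t+1) hv hblt
        obtain ⟨g1, g2⟩ := hrepval v (t+1) hv hblt
        have hrb : r (P v (t+1)) = f v - (t+1) := by rw [hr]; simp only [if_neg hbne, g1, g2]
        rw [hrb, hra]; omega
    intro a b hab
    obtain ⟨v, t, hv, ht, hcase⟩ := hS1 a b hab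
    rcases hcase with ⟨rfl, rfl⟩ | ⟨rfl, rfl⟩
    · exact Or.inl (hkey v t hv ht)
    · exact Or.inr (hkey v t hv ht)
  have hacyc : G.IsAcyclic := acyclic_of_rank par r hrank
  have htree : G.IsTree := ⟨hc, hacyc⟩
  have hdeg2 : ∀ x, x ≠ e → G.degree x ≤ 2 := by
    intro x hx
    obtain ⟨v, t, hv, ht, hPx⟩ := hrep x hx
    have hsubset : G.neighborFinset x ⊆ {P v (t+1), P v (t-1)} := by
      intro y hy
      rw [SimpleGraph.mem_neighborFinset] at hy
      obtain ⟨w, s, hw, hs, hcase⟩ := hS1 x y hy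
      rcases hcase with ⟨hx1, hy1⟩ | ⟨hy1, hx1⟩
      · obtain ⟨rfl, rfl⟩ := hinj w v s t hw hv hs ht (by rw [← hx1, hPx])
        rw [Finset.mem_insert]
        left
        exact hy1
      · by_cases hsf : s + 1 = f w
        · exfalso
          apply hx
          rw [hx1, hsf]
          exact hend w hw
        · have hlt : s + 1 < f w := by omega
          obtain ⟨rfl, hst⟩ := hinj w v (s+1) t hw hv hlt ht (by rw [← hx1, hPx])
          rw [Finset.mem_insert, Finset.mem_singleton]
          right
          rw [hy1]
          congr 1
          omega
    have hcle := Finset.card_le_card hsubset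
    rw [SimpleGraph.card_neighborFinset_eq_degree] at hcle
    calc G.degree x ≤ ({P v (t+1), P v (t-1)} : Finset V).card := hcle
      _ ≤ 2 := Finset.card_le_two
  by_cases hsp : ∃ x, 3 ≤ G.degree x
  · right
    obtain ⟨x, hx3⟩ := hsp
    have hxe : x = e := by
      by_contra h
      have := hdeg2 x h
      omega
    refine ⟨htree, x, hx3, fun y hy => ?_⟩
    have hye : y = e := by
      by_contra h
      have := hdeg2 y h
      omega
    rw [hye, hxe]
  · left
    push_neg at hsp
    exact ⟨htree, fun v => by have := hsp v; omega⟩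

end AuxD
section AuxE
variable {V : Type*} [Fintype V] {G : SimpleGraph V}

lemma bn_construct (hT : G.IsTree) (b : V) (hdeg : ∀ x, x ≠ b → G.degree x ≤ 2) :
    ∃ f : V → ℕ, BnIndep G f ∧ bweight f = Fintype.card V - 1 := by
  classical
  have hc : G.Connected := hT.isConnected
  have hq : ∀ u : V, ∃ p : G.Walk b u, p.IsPath ∧ p.length = G.dist b u :=
    fun u => hc.exists_path_of_dist b u
  choose q hqpath hqlen using hq
  have hpos : ∀ u i, i ≤ G.dist b u → G.dist b ((q u).getVert i) = i := by
    intro u i hi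
    exact dist_getVert hc (q u) (hqlen u) (by rw [hqlen u]; exact hi)
  have hgetlast : ∀ u, (q u).getVert (G.dist b u) = u := by
    intro u
    rw [← hqlen u]
    exact (q u).getVert_length
  -- two distinct neighbors for internal vertices of geodesics
  have hinternal : ∀ u p, 1 ≤ p → p < G.dist b u → 2 ≤ G.degree ((q u).getVert p) := by
    intro u p h1 h2
    have hlen : p < (q u).length := by rw [hqlen u]; exact h2
    have hadj2 : G.Adj ((q u).getVert p) ((q u).getVert (p+1)) := (q u).adj_getVert_succ hlen
    have hadj1 : G.Adj ((q u).getVert p) ((q u).getVert (p-1)) := by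
      have := (q u).adj_getVert_succ (i := p - 1) (by omega)
      rw [(by omega : p - 1 + 1 = p)] at this
      exact this.symm
    have hne : (q u).getVert (p+1) ≠ (q u).getVert (p-1) := by
      intro h
      have e1 := hpos u (p+1) (by omega)
      have e2 := hpos u (p-1) (by omega)
      rw [h] at e1
      omega
    have hsub : ({(q u).getVert (p+1), (q u).getVert (p-1)} : Finset V) ⊆
        G.neighborFinset ((q u).getVert p) := by
      intro z hz
      rw [Finset.mem_insert, Finset.mem_singleton] at hz
      rw [SimpleGraph.mem_neighborFinset]
      rcases hz with rfl | rfl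
      · exact hadj2
      · exact hadj1
    have := Finset.card_le_card hsub
    rw [SimpleGraph.card_neighborFinset_eq_degree, Finset.card_pair hne] at this
    exact this
  -- uniqueness of the leaf geodesic through a vertex
  have huniq : ∀ ℓ₁ ℓ₂ x, G.degree ℓ₁ = 1 → ℓ₁ ≠ b → G.degree ℓ₂ = 1 → ℓ₂ ≠ b → x ≠ b →
      x ∈ (q ℓ₁).support → x ∈ (q ℓ₂).support → ℓ₁ = ℓ₂ := by
    intro ℓ₁ ℓ₂ x hd1 hb1 hd2 hb2 hxb hx1 hx2
    by_contra hne12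
    set C : Finset V := Finset.univ.filter
      (fun y => y ∈ (q ℓ₁).support ∧ y ∈ (q ℓ₂).support ∧ y ≠ b) with hC
    have hCne : C.Nonempty := ⟨x, by rw [hC, Finset.mem_filter]; exact ⟨Finset.mem_univ _, hx1, hx2, hxb⟩⟩
    obtain ⟨y, hyC, hymax⟩ := Finset.exists_max_image C (fun y => G.dist b y) hCne
    rw [hC, Finset.mem_filter] at hyC
    obtain ⟨-, hy1, hy2, hyb⟩ := hyC
    obtain ⟨k₁, hk₁, hk₁le⟩ := SimpleGraph.Walk.mem_support_iff_exists_getVert.mp hy1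
    obtain ⟨k₂, hk₂, hk₂le⟩ := SimpleGraph.Walk.mem_support_iff_exists_getVert.mp hy2
    rw [hqlen ℓ₁] at hk₁le
    rw [hqlen ℓ₂] at hk₂le
    have hdk₁ : G.dist b y = k₁ := by rw [← hk₁]; exact hpos ℓ₁ k₁ hk₁le
    have hdk₂ : G.dist b y = k₂ := by rw [← hk₂]; exact hpos ℓ₂ k₂ hk₂le
    set p := G.dist b y with hp
    have hyq₁ : (q ℓ₁).getVert p = y := by rw [hdk₁]; exact hk₁
    have hyq₂ : (q ℓ₂).getVert p = y := by rw [hdk₂]; exact hk₂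
    have hp1 : 1 ≤ p := by
      have : 0 < G.dist b y := hc.pos_dist_of_ne (Ne.symm hyb)
      omega
    -- y is not ℓ₁
    have hlt1 : p < G.dist b ℓ₁ := by
      rcases Nat.lt_or_ge p (G.dist b ℓ₁) with h | h
      · exact h
      · exfalso
        have hyℓ₁ : y = ℓ₁ := by
          rw [← hk₁, (by omega : k₁ = G.dist b ℓ₁)]
          exact hgetlast ℓ₁
        have hlt2 : p < G.dist b ℓ₂ := by
          rcases Nat.lt_or_ge p (G.dist b ℓ₂) with h' | h'
          · exact h'
          · exfalso
            have hyℓ₂ : y = ℓ₂ := by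
              rw [← hk₂, (by omega : k₂ = G.dist b ℓ₂)]
              exact hgetlast ℓ₂
            exact hne12 (hyℓ₁ ▸ hyℓ₂ ▸ rfl)
        have := hinternal ℓ₂ p hp1 hlt2
        rw [hyq₂, hyℓ₁, hd1] at this
        omega
    have hlt2 : p < G.dist b ℓ₂ := by
      rcases Nat.lt_or_ge p (G.dist b ℓ₂) with h' | h'
      · exact h'
      · exfalso
        have hyℓ₂ : y = ℓ₂ := by
          rw [← hk₂, (by omega : k₂ = G.dist b ℓ₂)]
          exact hgetlast ℓ₂
        have := hinternal ℓ₁ p hp1 hlt1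
        rw [hyq₁, hyℓ₂, hd2] at this
        omega
    -- three distinct neighbors of y
    set n₁ := (q ℓ₁).getVert (p+1) with hn₁
    set n₂ := (q ℓ₂).getVert (p+1) with hn₂
    set pr := (q ℓ₁).getVert (p-1) with hpr
    have hdn₁ : G.dist b n₁ = p + 1 := hpos ℓ₁ (p+1) (by omega)
    have hdn₂ : G.dist b n₂ = p + 1 := hpos ℓ₂ (p+1) (by omega)
    have hdpr : G.dist b pr = p - 1 := hpos ℓ₁ (p-1) (by omega)
    have hn12 : n₁ ≠ n₂ := by
      intro h
      have hzb : n₁ ≠ b := by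
        intro hzb
        rw [hzb, SimpleGraph.dist_self] at hdn₁
        omega
      have hn₁mem : n₁ ∈ C := by
        rw [hC, Finset.mem_filter]
        refine ⟨Finset.mem_univ _, ?_, ?_, hzb⟩
        · exact SimpleGraph.Walk.mem_support_iff_exists_getVert.mpr
            ⟨p+1, rfl, by rw [hqlen ℓ₁]; omega⟩
        · rw [h]
          exact SimpleGraph.Walk.mem_support_iff_exists_getVert.mpr
            ⟨p+1, rfl, by rw [hqlen ℓ₂]; omega⟩
      have := hymax n₁ hn₁mem
      omega
    have hprn₁ : pr ≠ n₁ := by intro h; rw [h] at hdpr; omega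
    have hprn₂ : pr ≠ n₂ := by intro h; rw [h] at hdpr; omega
    have hadjn₁ : G.Adj y n₁ := by
      have := (q ℓ₁).adj_getVert_succ (i := p) (by rw [hqlen ℓ₁]; omega)
      rw [hyq₁] at this
      exact this
    have hadjn₂ : G.Adj y n₂ := by
      have := (q ℓ₂).adj_getVert_succ (i := p) (by rw [hqlen ℓ₂]; omega)
      rw [hyq₂] at this
      exact this
    have hadjpr : G.Adj y pr := by
      have := (q ℓ₁).adj_getVert_succ (i := p - 1) (by rw [hqlen ℓ₁]; omega)
      rw [(by omega : p - 1 + 1 = p), hyq₁] at this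
      exact this.symm
    have hsub : ({pr, n₁, n₂} : Finset V) ⊆ G.neighborFinset y := by
      intro z hz
      rw [Finset.mem_insert, Finset.mem_insert, Finset.mem_singleton] at hz
      rw [SimpleGraph.mem_neighborFinset]
      rcases hz with rfl | rfl | rfl
      · exact hadjpr
      · exact hadjn₁
      · exact hadjn₂
    have hc3 : ({pr, n₁, n₂} : Finset V).card = 3 := by
      rw [Finset.card_insert_of_notMem (by
        rw [Finset.mem_insert, Finset.mem_singleton]
        push_neg
        exact ⟨hprn₁, hprn₂⟩), Finset.card_pair hn12]
    have hle := Finset.card_le_card hsub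
    rw [SimpleGraph.card_neighborFinset_eq_degree, hc3] at hle
    have := hdeg y hyb
    omega
  -- every non-b vertex lies on a leaf geodesic
  have hsurj : ∀ x, x ≠ b → ∃ ℓ, G.degree ℓ = 1 ∧ ℓ ≠ b ∧ x ∈ (q ℓ).support := by
    intro x hxb
    set S : Finset V := Finset.univ.filter (fun u => x ∈ (q u).support) with hSdef
    have hSne : S.Nonempty :=
      ⟨x, by rw [hSdef, Finset.mem_filter]; exact ⟨Finset.mem_univ _, (q x).end_mem_support⟩⟩
    obtain ⟨ℓ, hℓS, hℓmax⟩ := Finset.exists_max_image S (fun u => G.dist b u) hSne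
    rw [hSdef, Finset.mem_filter] at hℓS
    have hxsup := hℓS.2
    set d := G.dist b ℓ with hd
    obtain ⟨k, hk, hkle⟩ := SimpleGraph.Walk.mem_support_iff_exists_getVert.mp hxsup
    rw [hqlen ℓ] at hkle
    have hdx : G.dist b x = k := by rw [← hk]; exact hpos ℓ k hkle
    have hxpos : 0 < G.dist b x := hc.pos_dist_of_ne (Ne.symm hxb)
    have hd1 : 1 ≤ d := by omega
    have hℓb : ℓ ≠ b := by
      intro h
      rw [h, SimpleGraph.dist_self] at hd
      omega
    set pen := (q ℓ).getVert (d - 1) with hpen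
    have hadjpen : G.Adj ℓ pen := by
      have := (q ℓ).adj_getVert_succ (i := d - 1) (by rw [hqlen ℓ]; omega)
      rw [(by omega : d - 1 + 1 = d), (by rw [hd]; exact hgetlast ℓ : (q ℓ).getVert d = ℓ)] at this
      exact this.symm
    have hnbr : G.neighborFinset ℓ ⊆ {pen} := by
      intro z hz
      rw [SimpleGraph.mem_neighborFinset] at hz
      rw [Finset.mem_singleton]
      by_cases hzs : z ∈ (q ℓ).support
      · obtain ⟨m, hm, hmle⟩ := SimpleGraph.Walk.mem_support_iff_exists_getVert.mp hzs
        rw [hqlen ℓ] at hmle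
        have hdm : G.dist b z = m := by rw [← hm]; exact hpos ℓ m hmle
        have htri : G.dist b ℓ ≤ G.dist b z + G.dist z ℓ := hc.dist_triangle
        have hdzℓ : G.dist z ℓ = 1 := SimpleGraph.dist_eq_one_iff_adj.mpr hz.symm
        have hmne : m ≠ d := by
          intro h
          apply hz.ne'
          rw [← hm, h, hd]
          exact hgetlast ℓ
        have : m = d - 1 := by omega
        rw [← hm, this]
      · exfalso
        set w' := (SimpleGraph.Walk.cons hz.symm (q ℓ).reverse).reverse with hw'
        have hw'path : w'.IsPath := by
          rw [hw', SimpleGraph.Walk.isPath_reverse_iff, SimpleGraph.Walk.cons_isPath_iff]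
          refine ⟨(hqpath ℓ).reverse, ?_⟩
          rw [SimpleGraph.Walk.support_reverse, List.mem_reverse]
          exact hzs
        have hw'len : w'.length = d + 1 := by
          rw [hw', SimpleGraph.Walk.length_reverse, SimpleGraph.Walk.length_cons,
            SimpleGraph.Walk.length_reverse, hqlen ℓ]
        have hdz : G.dist b z = d + 1 := by
          rw [← tree_path_length hT w' hw'path, hw'len]
        have hxw' : x ∈ w'.support := by
          rw [hw', SimpleGraph.Walk.support_reverse, List.mem_reverse,
            SimpleGraph.Walk.support_cons, List.mem_cons]
          right
          rw [SimpleGraph.Walk.support_reverse, List.mem_reverse]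
          exact hxsup
        have hqz : q z = w' := by
          have := hT.IsAcyclic.path_unique ⟨q z, hqpath z⟩ ⟨w', hw'path⟩
          exact congrArg Subtype.val this
        have hzS : z ∈ S := by
          rw [hSdef, Finset.mem_filter]
          exact ⟨Finset.mem_univ _, by rw [hqz]; exact hxw'⟩
        have := hℓmax z hzS
        omega
    have hdegℓ : G.degree ℓ = 1 := by
      have hle := Finset.card_le_card hnbr
      rw [SimpleGraph.card_neighborFinset_eq_degree, Finset.card_singleton] at hle
      have hge : 0 < G.degree ℓ := by
        rw [← SimpleGraph.card_neighborFinset_eq_degree, Finset.card_pos]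
        exact ⟨pen, by rw [SimpleGraph.mem_neighborFinset]; exact hadjpen⟩
      omega
    exact ⟨ℓ, hdegℓ, hℓb, hxsup⟩
  -- sum over leaves
  set Lset : Finset V := Finset.univ.filter (fun ℓ => G.degree ℓ = 1 ∧ ℓ ≠ b) with hLset
  have hsum : ∑ ℓ ∈ Lset, G.dist b ℓ = Fintype.card V - 1 := by
    have hbij : (Lset.sigma (fun ℓ => Finset.range (G.dist b ℓ))).card
        = (Finset.univ.erase b).card := by
      apply Finset.card_bij (fun a _ => (q a.1).getVert (a.2 + 1))
      · rintro ⟨ℓ, i⟩ ha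
        rw [Finset.mem_sigma, hLset, Finset.mem_filter, Finset.mem_range] at ha
        dsimp only at ha
        obtain ⟨⟨-, hdeg1, hbne⟩, hir⟩ := ha
        refine Finset.mem_erase.mpr ⟨?_, Finset.mem_univ _⟩
        intro h
        have := hpos ℓ (i+1) (by omega)
        rw [h, SimpleGraph.dist_self] at this
        omega
      · rintro ⟨ℓ₁, i₁⟩ h₁ ⟨ℓ₂, i₂⟩ h₂ heq
        rw [Finset.mem_sigma, hLset, Finset.mem_filter, Finset.mem_range] at h₁ h₂
        dsimp only at h₁ h₂
        obtain ⟨⟨-, hd₁, hb₁⟩, hi₁⟩ := h₁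
        obtain ⟨⟨-, hd₂, hb₂⟩, hi₂⟩ := h₂
        simp only at heq
        have hdx1 : G.dist b ((q ℓ₁).getVert (i₁ + 1)) = i₁ + 1 := hpos ℓ₁ (i₁+1) (by omega)
        have hdx2 : G.dist b ((q ℓ₁).getVert (i₁ + 1)) = i₂ + 1 := by
          rw [heq]
          exact hpos ℓ₂ (i₂+1) (by omega)
        have hxb : (q ℓ₁).getVert (i₁ + 1) ≠ b := by
          intro h
          rw [h, SimpleGraph.dist_self] at hdx1
          omega
        have hmem1 : (q ℓ₁).getVert (i₁ + 1) ∈ (q ℓ₁).support :=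
          SimpleGraph.Walk.mem_support_iff_exists_getVert.mpr
            ⟨i₁ + 1, rfl, by rw [hqlen ℓ₁]; omega⟩
        have hmem2 : (q ℓ₁).getVert (i₁ + 1) ∈ (q ℓ₂).support := by
          rw [heq]
          exact SimpleGraph.Walk.mem_support_iff_exists_getVert.mpr
            ⟨i₂ + 1, rfl, by rw [hqlen ℓ₂]; omega⟩
        have hleq : ℓ₁ = ℓ₂ := huniq ℓ₁ ℓ₂ _ hd₁ hb₁ hd₂ hb₂ hxb hmem1 hmem2
        subst hleq
        have : i₁ = i₂ := by omega
        rw [this]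
      · intro x hxmem
        rw [Finset.mem_erase] at hxmem
        obtain ⟨hxb, -⟩ := hxmem
        obtain ⟨ℓ, hdeg1, hbne, hxsup⟩ := hsurj x hxb
        obtain ⟨k, hk, hkle⟩ := SimpleGraph.Walk.mem_support_iff_exists_getVert.mp hxsup
        rw [hqlen ℓ] at hkle
        have hdx : G.dist b x = k := by rw [← hk]; exact hpos ℓ k hkle
        have hk1 : 1 ≤ k := by
          have := hc.pos_dist_of_ne (Ne.symm hxb)
          omega
        refine ⟨⟨ℓ, k - 1⟩, ?_, ?_⟩
        · rw [Finset.mem_sigma, hLset, Finset.mem_filter, Finset.mem_range]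
          refine ⟨⟨Finset.mem_univ _, hdeg1, hbne⟩, ?_⟩
          dsimp only
          omega
        · simp only
          rw [(by omega : k - 1 + 1 = k)]
          exact hk
    rw [Finset.card_sigma] at hbij
    simp only [Finset.card_range] at hbij
    rwa [Finset.card_erase_of_mem (Finset.mem_univ b), Finset.card_univ] at hbij
  -- the broadcast function
  set f : V → ℕ := fun x => if G.degree x = 1 ∧ x ≠ b then G.dist x b else 0 with hfdef
  have hfval : ∀ ℓ, G.degree ℓ = 1 → ℓ ≠ b → f ℓ = G.dist ℓ b := by
    intro ℓ h1 h2
    rw [hfdef]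
    simp only [if_pos (And.intro h1 h2)]
  have hfpos_mem : ∀ v, 0 < f v → G.degree v = 1 ∧ v ≠ b := by
    intro v hv
    by_contra h
    rw [hfdef] at hv
    simp only [if_neg h] at hv
    omega
  have hkey : ∀ ℓ₁ ℓ₂, G.degree ℓ₁ = 1 → ℓ₁ ≠ b → G.degree ℓ₂ = 1 → ℓ₂ ≠ b → ℓ₁ ≠ ℓ₂ →
      G.dist ℓ₁ ℓ₂ = G.dist b ℓ₁ + G.dist b ℓ₂ := by
    intro ℓ₁ ℓ₂ h1 hb1 h2 hb2 hne12
    set W := (q ℓ₁).reverse.append (q ℓ₂) with hW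
    have hWlen : W.length = G.dist b ℓ₁ + G.dist b ℓ₂ := by
      rw [hW, SimpleGraph.Walk.length_append, SimpleGraph.Walk.length_reverse, hqlen, hqlen]
    have hWpath : W.IsPath := by
      rw [SimpleGraph.Walk.isPath_def, hW, SimpleGraph.Walk.support_append]
      apply List.Nodup.append
      · rw [SimpleGraph.Walk.support_reverse]
        exact List.nodup_reverse.mpr (hqpath ℓ₁).support_nodup
      · exact List.Nodup.sublist (List.tail_sublist _) (hqpath ℓ₂).support_nodup
      · intro y hy1 hy2
        rw [SimpleGraph.Walk.support_reverse, List.mem_reverse] at hy1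
        have hyb : y ≠ b := by
          intro h
          have hnodup := (hqpath ℓ₂).support_nodup
          rw [SimpleGraph.Walk.support_eq_cons, List.nodup_cons] at hnodup
          rw [h] at hy2
          exact hnodup.1 hy2
        have hy2' : y ∈ (q ℓ₂).support := by
          rw [SimpleGraph.Walk.support_eq_cons]
          exact List.mem_cons_of_mem _ hy2
        exact hne12 (huniq ℓ₁ ℓ₂ y h1 hb1 h2 hb2 hyb hy1 hy2')
    rw [← tree_path_length hT W hWpath, hWlen]
  refine ⟨f, ⟨?_, ?_⟩, ?_⟩
  · intro v
    rw [hfdef]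
    by_cases h : G.degree v = 1 ∧ v ≠ b
    · simp only [if_pos h]
      exact Finset.le_sup (f := fun u => G.dist v u) (Finset.mem_univ b)
    · simp only [if_neg h]
      exact Nat.zero_le _
  · intro w v₁ v₂ hne h1 h2
    obtain ⟨hposv₁, hdw1⟩ := h1
    obtain ⟨hposv₂, hdw2⟩ := h2
    obtain ⟨hdeg1, hb1⟩ := hfpos_mem v₁ hposv₁
    obtain ⟨hdeg2, hb2⟩ := hfpos_mem v₂ hposv₂
    have hf1 : f v₁ = G.dist v₁ b := hfval v₁ hdeg1 hb1
    have hf2 : f v₂ = G.dist v₂ b := hfval v₂ hdeg2 hb2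
    have hk := hkey v₁ v₂ hdeg1 hb1 hdeg2 hb2 hne
    have ht1 : G.dist v₁ v₂ ≤ G.dist v₁ w + G.dist w v₂ := hc.dist_triangle
    have hcomm1 : G.dist v₁ w = G.dist w v₁ := SimpleGraph.dist_comm
    have hcomm2 : G.dist b v₁ = G.dist v₁ b := SimpleGraph.dist_comm
    have hcomm3 : G.dist b v₂ = G.dist v₂ b := SimpleGraph.dist_comm
    omega
  · rw [bweight]
    calc ∑ x, f x = ∑ x ∈ Lset, G.dist x b := by
          rw [hLset, Finset.sum_filter]
      _ = ∑ x ∈ Lset, G.dist b x := Finset.sum_congr rfl (fun x _ => SimpleGraph.dist_comm)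
      _ = Fintype.card V - 1 := hsum

end AuxE
/-- For a connected graph `G` of order `n`, `α_bn(G) = n - 1` iff `G` is a path
or a generalized spider. -/
theorem stmt4 {V : Type*} [Fintype V] (G : SimpleGraph V) (hG : G.Connected) :
    alphaBn G = Fintype.card V - 1 ↔ IsPathGraph G ∨ IsGenSpider G := by
  classical
  have hzero : BnIndep G (fun _ => 0) :=
    ⟨fun v => Nat.zero_le _, fun w v₁ v₂ _ h1 _ => absurd h1.1 (lt_irrefl 0)⟩
  have hne : {w | ∃ f, BnIndep G f ∧ bweight f = w}.Nonempty :=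
    ⟨0, (fun _ => 0), hzero, by simp [bweight]⟩
  have hbdd : BddAbove {w | ∃ f, BnIndep G f ∧ bweight f = w} := by
    refine ⟨Fintype.card V - 1, ?_⟩
    rintro w ⟨f, hf, rfl⟩
    exact bn_weight_le hG hf
  constructor
  · intro h
    have hmem := Nat.sSup_mem hne hbdd
    obtain ⟨f, hf, hwf⟩ := hmem
    have h' : sSup {w | ∃ f, BnIndep G f ∧ bweight f = w} = Fintype.card V - 1 := h
    exact bn_structure hG hf (by rw [hwf, h'])
  · intro h
    have hex : ∃ b : V, ∀ x, x ≠ b → G.degree x ≤ 2 ∧ G.IsTree := by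
      rcases h with ⟨htree, hdeg⟩ | ⟨htree, b, hb3, huniqb⟩
      · have : Nonempty V := hG.nonempty
        exact ⟨Classical.arbitrary V, fun x _ => ⟨hdeg x, htree⟩⟩
      · refine ⟨b, fun x hx => ⟨?_, htree⟩⟩
        by_contra h'
        push_neg at h'
        exact hx (huniqb x (by omega))
    have htree : G.IsTree := by
      rcases h with ⟨htree, -⟩ | ⟨htree, -⟩ <;> exact htree
    obtain ⟨b, hb⟩ := hex
    obtain ⟨f, hf, hwf⟩ := bn_construct htree b (fun x hx => (hb x hx).1)
    refine le_antisymm ?_ ?_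
    · refine csSup_le hne ?_
      rintro w ⟨g, hg, rfl⟩
      exact bn_weight_le hG hg
    · exact le_csSup hbdd ⟨f, hf, hwf⟩
end
end

section
/- For any tree T there exists a maximum-weight bn-independent broadcast f such that f(v) = 1 for every broadcasting vertex v that is not a leaf. -/
open SimpleGraph Finset
open scoped Classical

noncomputable section

namespace Stmt7Aux

set_option linter.unusedSectionVars false
set_option linter.unusedVariables false
variable {V : Type*} [Fintype V] {T : SimpleGraph V}

lemma path_eq (hT : T.IsTree) {u v : V} {p q : T.Walk u v} (hp : p.IsPath) (hq : q.IsPath) :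
    p = q := ((hT.existsUnique_path u v).unique hp hq)

def pth (hT : T.IsTree) (u v : V) : T.Walk u v := (hT.existsUnique_path u v).choose

lemma pth_isPath (hT : T.IsTree) (u v : V) : (pth hT u v).IsPath :=
  (hT.existsUnique_path u v).choose_spec.1

lemma length_pth (hT : T.IsTree) (u v : V) : (pth hT u v).length = T.dist u v := by
  have h1 : T.dist u v ≤ (pth hT u v).length := SimpleGraph.dist_le _
  obtain ⟨w, hw⟩ := (hT.isConnected u v).exists_walk_length_eq_dist
  have h2 : w.bypass = pth hT u v := path_eq hT w.bypass_isPath (pth_isPath hT u v)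
  have h3 : (pth hT u v).length ≤ T.dist u v := by
    rw [← h2, ← hw]; exact w.length_bypass_le
  omega

lemma dist_lt_card (hT : T.IsTree) (u v : V) : T.dist u v < Fintype.card V := by
  rw [← length_pth hT u v]; exact (pth_isPath hT u v).length_lt

/-- distance through an interior vertex of a walk -/
lemma dist_add_dist_le_length (hconn : T.Connected) {u y : V} (q : T.Walk u y) {v : V}
    (hv : v ∈ q.support) : T.dist u v + T.dist v y ≤ q.length := by
  have := q.take_spec hv
  calc T.dist u v + T.dist v y ≤ (q.takeUntil v hv).length + (q.dropUntil v hv).length :=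
        Nat.add_le_add (SimpleGraph.dist_le _) (SimpleGraph.dist_le _)
    _ = q.length := by rw [← SimpleGraph.Walk.length_append, this]

/-- adjacent vertices have different distances to any vertex (trees) -/
lemma adj_dist_ne (hT : T.IsTree) {u v : V} (h : T.Adj u v) (w : V) :
    T.dist w u ≠ T.dist w v := by
  intro he
  have hq : (pth hT w u).length = T.dist w u := length_pth hT w u
  have hvns : v ∉ (pth hT w u).support := by
    intro hv
    have := dist_add_dist_le_length hT.isConnected (pth hT w u) hv
    have hd1 : T.dist v u = 1 := SimpleGraph.dist_eq_one_iff_adj.mpr h.symm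
    have hwv : T.dist w v = T.dist w u := he.symm
    omega
  set r : T.Walk v w := SimpleGraph.Walk.cons h.symm (pth hT w u).reverse with hr
  have hrpath : r.IsPath := by
    rw [hr, SimpleGraph.Walk.cons_isPath_iff]
    refine ⟨(pth_isPath hT w u).reverse, ?_⟩
    rw [SimpleGraph.Walk.support_reverse]
    simpa using hvns
  have heq := path_eq hT hrpath.reverse (pth_isPath hT w v)
  have := congrArg SimpleGraph.Walk.length heq
  rw [SimpleGraph.Walk.length_reverse, hr, SimpleGraph.Walk.length_cons,
    SimpleGraph.Walk.length_reverse, hq, length_pth hT w v] at this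
  omega


def dir (hT : T.IsTree) (v y : V) : V := (pth hT v y).getVert 1

lemma pth_cons (hT : T.IsTree) {v y : V} (h : v ≠ y) :
    ∃ (q : T.Walk (dir hT v y) y) (ha : T.Adj v (dir hT v y)),
      pth hT v y = SimpleGraph.Walk.cons ha q := by
  obtain ⟨u, ha, q, hq⟩ := SimpleGraph.Walk.exists_eq_cons_of_ne h (pth hT v y)
  have hd : dir hT v y = u := by
    rw [dir, hq, SimpleGraph.Walk.getVert_cons_succ, SimpleGraph.Walk.getVert_zero]
  subst hd
  exact ⟨q, ha, hq⟩

lemma adj_dir (hT : T.IsTree) {v y : V} (h : v ≠ y) : T.Adj v (dir hT v y) := by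
  obtain ⟨q, ha, hq⟩ := pth_cons hT h; exact ha

lemma dist_dir (hT : T.IsTree) {v y : V} (h : v ≠ y) :
    T.dist (dir hT v y) y + 1 = T.dist v y := by
  obtain ⟨q, ha, hq⟩ := pth_cons hT h
  have hqp : q.IsPath := by
    have := pth_isPath hT v y
    rw [hq] at this
    exact this.of_cons
  have h2 : q = pth hT (dir hT v y) y := path_eq hT hqp (pth_isPath hT _ y)
  have h3 := congrArg SimpleGraph.Walk.length hq
  rw [SimpleGraph.Walk.length_cons, length_pth, h2, length_pth] at h3
  omega

lemma adj_dist_cases (hT : T.IsTree) {u v : V} (h : T.Adj u v) (w : V) :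
    T.dist w u = T.dist w v + 1 ∨ T.dist w u + 1 = T.dist w v := by
  have h1 : T.dist w u ≤ T.dist w v + 1 := by
    have := hT.isConnected.dist_triangle (u := w) (v := v) (w := u)
    have hd : T.dist v u = 1 := SimpleGraph.dist_eq_one_iff_adj.mpr h.symm
    omega
  have h2 : T.dist w v ≤ T.dist w u + 1 := by
    have := hT.isConnected.dist_triangle (u := w) (v := u) (w := v)
    have hd : T.dist u v = 1 := SimpleGraph.dist_eq_one_iff_adj.mpr h
    omega
  have := adj_dist_ne hT h w
  omega

lemma dir_unique (hT : T.IsTree) {v y u : V} (h : v ≠ y) (ha : T.Adj v u)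
    (hd : T.dist u y + 1 = T.dist v y) : u = dir hT v y := by
  set q := pth hT u y with hq
  have hlq : q.length = T.dist u y := length_pth hT u y
  have hvq : v ∉ q.support := by
    intro hv
    have := dist_add_dist_le_length hT.isConnected q hv
    have h1 : T.dist u v = 1 := SimpleGraph.dist_eq_one_iff_adj.mpr ha.symm
    omega
  have hpath : (SimpleGraph.Walk.cons ha q).IsPath :=
    (SimpleGraph.Walk.cons_isPath_iff ha q).mpr ⟨pth_isPath hT u y, hvq⟩
  have heq := path_eq hT hpath (pth_isPath hT v y)
  have := congrArg (fun p => SimpleGraph.Walk.getVert p 1) heq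
  simp only [SimpleGraph.Walk.getVert_cons_succ, SimpleGraph.Walk.getVert_zero] at this
  rw [← dir] at this
  exact this

lemma dir_of_adj (hT : T.IsTree) {v u : V} (h : T.Adj v u) : dir hT v u = u := by
  have hne : v ≠ u := h.ne
  have h1 := dist_dir hT hne
  have h2 : T.dist v u = 1 := SimpleGraph.dist_eq_one_iff_adj.mpr h
  have h3 : T.dist (dir hT v u) u = 0 := by omega
  exact (hT.isConnected.dist_eq_zero_iff.mp h3)

lemma dir_far (hT : T.IsTree) {v y u : V} (h : v ≠ y) (ha : T.Adj v u)
    (hne : u ≠ dir hT v y) : T.dist u y = T.dist v y + 1 := by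
  rcases adj_dist_cases hT ha.symm y with h1 | h1
  · rw [SimpleGraph.dist_comm (u := y) (v := u), SimpleGraph.dist_comm (u := y) (v := v)] at h1
    exact h1
  · rw [SimpleGraph.dist_comm (u := y) (v := u), SimpleGraph.dist_comm (u := y) (v := v)] at h1
    exact absurd (dir_unique hT h ha h1) hne

/-- sequence of vertices at each distance toward y, staying in the same branch -/
lemma exists_between (hT : T.IsTree) {v y : V} (h : v ≠ y) :
    ∀ t, 1 ≤ t → t ≤ T.dist v y →
      ∃ w, T.dist v w = t ∧ T.dist w y + t = T.dist v y ∧ dir hT v w = dir hT v y := by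
  intro t
  induction t with
  | zero => omega
  | succ t ih =>
    intro h1 h2
    rcases Nat.eq_or_lt_of_le h1 with h0 | h0
    · -- t + 1 = 1
      refine ⟨dir hT v y, ?_, ?_, ?_⟩
      · have : T.dist v (dir hT v y) = 1 :=
          SimpleGraph.dist_eq_one_iff_adj.mpr (adj_dir hT h)
        omega
      · have := dist_dir hT h
        omega
      · have := dir_of_adj hT (adj_dir hT h)
        rw [this]
    · obtain ⟨w, hw1, hw2, hw3⟩ := ih (by omega) (by omega)
      have hvw : v ≠ w := by
        intro he; rw [← he, SimpleGraph.dist_self] at hw1; omega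
      have hwy : w ≠ y := by
        intro he; rw [he, SimpleGraph.dist_self] at hw2; omega
      set w' := dir hT w y with hw'
      have hadj : T.Adj w w' := adj_dir hT hwy
      have hd' : T.dist w' y + 1 = T.dist w y := dist_dir hT hwy
      have hdvw' : T.dist v w' = t + 1 := by
        have hle : T.dist v w' ≤ t + 1 := by
          have := hT.isConnected.dist_triangle (u := v) (v := w) (w := w')
          have : T.dist w w' = 1 := SimpleGraph.dist_eq_one_iff_adj.mpr hadj
          omega
        have hge : t + 1 ≤ T.dist v w' := by
          have := hT.isConnected.dist_triangle (u := v) (v := w') (w := y)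
          omega
        omega
      have hvw' : v ≠ w' := by
        intro he; rw [← he, SimpleGraph.dist_self] at hdvw'; omega
      refine ⟨w', hdvw', by omega, ?_⟩
      -- dir v w' = dir v w = dir v y
      set u := dir hT v w with hu
      have huw : T.dist u w + 1 = T.dist v w := dist_dir hT hvw
      have huvadj : T.Adj v u := adj_dir hT hvw
      have huw' : T.dist u w' + 1 = T.dist v w' := by
        have hle : T.dist u w' ≤ t := by
          have := hT.isConnected.dist_triangle (u := u) (v := w) (w := w')
          have : T.dist w w' = 1 := SimpleGraph.dist_eq_one_iff_adj.mpr hadj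
          omega
        have hge : t ≤ T.dist u w' := by
          have := hT.isConnected.dist_triangle (u := v) (v := u) (w := w')
          have : T.dist v u = 1 := SimpleGraph.dist_eq_one_iff_adj.mpr huvadj
          omega
        omega
      have hlast := dir_unique hT hvw' huvadj huw'
      rw [← hlast, ← hw3]


def depth (hT : T.IsTree) (v u : V) : ℕ :=
  (Finset.univ.filter (fun y => y ≠ v ∧ dir hT v y = u)).sup (T.dist v)

def mm (hT : T.IsTree) (v : V) : ℕ := sInf {n | ∃ u, T.Adj v u ∧ depth hT v u = n}

lemma le_depth (hT : T.IsTree) {v y u : V} (h : y ≠ v) (hd : dir hT v y = u) :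
    T.dist v y ≤ depth hT v u :=
  Finset.le_sup (by simp [h, hd])

lemma depth_le (hT : T.IsTree) {v u : V} {n : ℕ}
    (h : ∀ y, y ≠ v → dir hT v y = u → T.dist v y ≤ n) : depth hT v u ≤ n := by
  apply Finset.sup_le
  intro y hy
  simp only [Finset.mem_filter] at hy
  exact h y hy.2.1 hy.2.2

lemma one_le_depth (hT : T.IsTree) {v u : V} (h : T.Adj v u) : 1 ≤ depth hT v u := by
  have h1 : T.dist v u = 1 := SimpleGraph.dist_eq_one_iff_adj.mpr h
  have := le_depth hT h.ne' (dir_of_adj hT h)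
  omega

lemma depth_le_card (hT : T.IsTree) (v u : V) : depth hT v u ≤ Fintype.card V :=
  depth_le hT (fun y _ _ => (dist_lt_card hT v y).le)

lemma mm_le (hT : T.IsTree) {v u : V} (h : T.Adj v u) : mm hT v ≤ depth hT v u :=
  Nat.sInf_le ⟨u, h, rfl⟩

lemma mm_mem (hT : T.IsTree) {v u₀ : V} (h : T.Adj v u₀) :
    ∃ u, T.Adj v u ∧ depth hT v u = mm hT v := by
  have : {n | ∃ u, T.Adj v u ∧ depth hT v u = n}.Nonempty := ⟨_, u₀, h, rfl⟩
  obtain ⟨u, hu, he⟩ := Nat.sInf_mem this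
  exact ⟨u, hu, he⟩

lemma mm_le_card (hT : T.IsTree) {v u : V} (h : T.Adj v u) : mm hT v ≤ Fintype.card V :=
  (mm_le hT h).trans (depth_le_card hT v u)

lemma claimC (hT : T.IsTree) {v u₂ u₃ y : V} (hadj : T.Adj v u₂) (hy : y ≠ u₂)
    (hdir : dir hT u₂ y = u₃) (hu₃ : u₃ ≠ v) :
    dir hT v y = u₂ ∧ T.dist u₂ y + 1 = T.dist v y := by
  have hyv : y ≠ v := by
    intro he
    subst he
    rw [dir_of_adj hT hadj.symm] at hdir
    exact hu₃ hdir.symm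
  have hcases := adj_dist_cases hT hadj.symm y
  rw [SimpleGraph.dist_comm (u := y) (v := v), SimpleGraph.dist_comm (u := y) (v := u₂)] at hcases
  rcases hcases with h1 | h1
  · -- dist u₂ y = dist v y + 1, so v = dir u₂ y = u₃, contradiction
    have := dir_unique hT hy.symm hadj.symm (by omega)
    rw [hdir] at this
    exact absurd this.symm hu₃
  · -- dist u₂ y + 1 = dist v y
    refine ⟨(dir_unique hT hyv.symm hadj (by omega)).symm, by omega⟩


section Broadcast

variable (hT : T.IsTree)

def badterm (hT : T.IsTree) (f : V → ℕ) (x : V) : ℕ :=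
  if 2 ≤ f x ∧ T.degree x ≠ 1 then (Fintype.card V + 1) * f x + mm hT x else 0

def Phi (hT : T.IsTree) (f : V → ℕ) : ℕ := ∑ x, badterm hT f x

lemma split2 (F : V → ℕ) {a b : V} (hab : a ≠ b) :
    ∑ x, F x = F a + F b + ∑ x ∈ Finset.univ \ {a, b}, F x := by
  have hs : ∑ x ∈ ({a, b} : Finset V), F x = F a + F b := by
    rw [Finset.sum_insert (by simp [hab]), Finset.sum_singleton]
  rw [← Finset.sum_sdiff (Finset.subset_univ ({a, b} : Finset V)), hs]
  ring

lemma split3 (F : V → ℕ) {a b c : V} (hab : a ≠ b) (hac : a ≠ c) (hbc : b ≠ c) :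
    ∑ x, F x = F a + F b + F c + ∑ x ∈ Finset.univ \ {a, b, c}, F x := by
  have hs : ∑ x ∈ ({a, b, c} : Finset V), F x = F a + F b + F c := by
    rw [Finset.sum_insert (by simp [hab, hac]), Finset.sum_insert (by simp [hbc]),
      Finset.sum_singleton]
    ring
  rw [← Finset.sum_sdiff (Finset.subset_univ ({a, b, c} : Finset V)), hs]
  ring

lemma exchange (hT : T.IsTree) (f : V → ℕ) (hf : BnIndep T f) {v : V}
    (hk2 : 2 ≤ f v) (hdeg : T.degree v ≠ 1) :
    ∃ g, BnIndep T g ∧ bweight g = bweight f ∧ Phi hT g < Phi hT f := by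
  classical
  set N := Fintype.card V with hN
  set k := f v with hk
  have hconn := hT.isConnected
  -- eccentric vertex z
  have hNE : Nonempty V := ⟨v⟩
  have hecc : k ≤ gecc T v := hf.1 v
  obtain ⟨z, _, hz⟩ := Finset.exists_mem_eq_sup (Finset.univ : Finset V)
    (Finset.univ_nonempty (α := V)) (T.dist v)
  have hz' : k ≤ T.dist v z := by rw [gecc] at hecc; exact hz ▸ hecc
  have hvz : v ≠ z := by
    intro he; rw [← he, SimpleGraph.dist_self] at hz'; omega
  set u₁ := dir hT v z with hu₁
  have hadj₁ : T.Adj v u₁ := adj_dir hT hvz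
  -- interior lemma
  have I : ∀ w x, T.dist w v < k → x ≠ v → 0 < f x → T.dist w x ≤ f x → False := by
    intro w x hwv hx hfx hdx
    have := hf.2 w v x (Ne.symm hx) ⟨by omega, by omega⟩ ⟨hfx, hdx⟩
    omega
  have fz : ∀ x, T.dist x v < k → x ≠ v → f x = 0 := by
    intro x hx hxv
    by_contra hfx
    exact I x x hx hxv (Nat.pos_of_ne_zero hfx)
      (by rw [SimpleGraph.dist_self]; omega)
  -- degree at least 2
  have hdeg2 : 2 ≤ T.degree v := by
    have h1 : 0 < T.degree v := (T.degree_pos_iff_exists_adj v).mpr ⟨u₁, hadj₁⟩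
    omega
  obtain ⟨u', hu'mem, hu'ne⟩ := Finset.exists_mem_ne
    (s := T.neighborFinset v) (by rw [T.card_neighborFinset_eq_degree]; omega) u₁
  have hadj' : T.Adj v u' := by rwa [T.mem_neighborFinset] at hu'mem
  by_cases hA : ∃ y, y ≠ v ∧ dir hT v y ≠ u₁ ∧ k - 1 ≤ T.dist v y
  · -- Case A
    obtain ⟨y, hyv, hydir, hyd⟩ := hA
    obtain ⟨w₂, hw2d, _, hw2dir⟩ :=
      exists_between hT (Ne.symm hyv) (k - 1) (by omega) hyd
    set p₁ := u₁ with hp₁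
    have hvw₂ : v ≠ w₂ := by
      intro he; rw [← he, SimpleGraph.dist_self] at hw2d; omega
    have hdp₁ : T.dist v p₁ = 1 := SimpleGraph.dist_eq_one_iff_adj.mpr hadj₁
    have hdp₁w₂ : T.dist p₁ w₂ = k := by
      have := dir_far hT hvw₂ hadj₁ (by rw [hw2dir]; exact Ne.symm hydir)
      omega
    have hp₁w₂ : p₁ ≠ w₂ := by
      intro he; rw [he, SimpleGraph.dist_self] at hdp₁w₂; omega
    have hvp₁ : v ≠ p₁ := hadj₁.ne
    set g : V → ℕ := fun x => if x = v then 0 else if x = p₁ then k - 1 else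
      if x = w₂ then 1 else f x with hg
    have gv : g v = 0 := by simp [hg]
    have gp₁ : g p₁ = k - 1 := by simp [hg, Ne.symm hvp₁]
    have gw₂ : g w₂ = 1 := by simp [hg, Ne.symm hvw₂, Ne.symm hp₁w₂]
    have gother : ∀ x, x ≠ v → x ≠ p₁ → x ≠ w₂ → g x = f x := by
      intro x h1 h2 h3; simp [hg, h1, h2, h3]
    have fp₁ : f p₁ = 0 := fz p₁ (by rw [SimpleGraph.dist_comm]; omega) (Ne.symm hvp₁)
    have fw₂ : f w₂ = 0 := fz w₂ (by rw [SimpleGraph.dist_comm]; omega) (Ne.symm hvw₂)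
    have hbn : BnIndep T g := by
      constructor
      · intro x
        by_cases h1 : x = v
        · rw [h1, gv]; exact Nat.zero_le _
        by_cases h2 : x = p₁
        · rw [h2, gp₁]
          have : T.dist p₁ w₂ ≤ gecc T p₁ := Finset.le_sup (Finset.mem_univ w₂)
          omega
        by_cases h3 : x = w₂
        · rw [h3, gw₂]
          have : T.dist w₂ p₁ ≤ gecc T w₂ := Finset.le_sup (Finset.mem_univ p₁)
          rw [SimpleGraph.dist_comm] at this
          omega
        · rw [gother x h1 h2 h3]; exact hf.1 x
      · intro w a b hab ha hb
        obtain ⟨ha1, ha2⟩ := ha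
        obtain ⟨hb1, hb2⟩ := hb
        have hav : a ≠ v := by intro he; rw [he, gv] at ha1; omega
        have hbv : b ≠ v := by intro he; rw [he, gv] at hb1; omega
        -- triangle facts
        have t1 : T.dist w v ≤ T.dist w p₁ + 1 := by
          have := hconn.dist_triangle (u := w) (v := p₁) (w := v)
          rw [SimpleGraph.dist_comm (u := p₁)] at this
          omega
        have t2 : T.dist w v ≤ T.dist w w₂ + (k - 1) := by
          have := hconn.dist_triangle (u := w) (v := w₂) (w := v)
          rw [SimpleGraph.dist_comm (u := w₂)] at this
          omega
        have t3 : k ≤ T.dist w p₁ + T.dist w w₂ := by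
          have := hconn.dist_triangle (u := p₁) (v := w) (w := w₂)
          rw [SimpleGraph.dist_comm (u := p₁) (v := w)] at this
          omega
        by_cases hap : a = p₁
        · subst hap
          rw [gp₁] at ha1 ha2 ⊢
          by_cases hbw : b = w₂
          · subst hbw
            rw [gw₂] at hb2
            omega
          · -- b is an old broadcaster
            rw [gother b hbv (Ne.symm hab) hbw] at hb1 hb2
            have hwv : T.dist w v ≤ k := by omega
            rcases Nat.lt_or_ge (T.dist w v) k with hlt | hge
            · exact absurd (I w b hlt hbv hb1 hb2) not_false
            · omega
        by_cases haw : a = w₂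
        · subst haw
          rw [gw₂] at ha1 ha2 ⊢
          by_cases hbp : b = p₁
          · subst hbp
            rw [gp₁] at hb2
            omega
          · rw [gother b hbv hbp (Ne.symm hab)] at hb1 hb2
            have hwv : T.dist w v ≤ k := by omega
            rcases Nat.lt_or_ge (T.dist w v) k with hlt | hge
            · exact absurd (I w b hlt hbv hb1 hb2) not_false
            · omega
        · -- a is old
          rw [gother a hav hap haw] at ha1 ha2 ⊢
          by_cases hbp : b = p₁
          · have hle : T.dist w v ≤ k := by rw [hbp, gp₁] at hb2; omega
            have hwvk : T.dist w v = k := by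
              rcases Nat.lt_or_ge (T.dist w v) k with hlt | hge
              · exact (I w a hlt hav ha1 ha2).elim
              · omega
            exact hf.2 w a v hav ⟨ha1, ha2⟩ ⟨by omega, by omega⟩
          by_cases hbw : b = w₂
          · have hle : T.dist w v ≤ k := by rw [hbw, gw₂] at hb2; omega
            have hwvk : T.dist w v = k := by
              rcases Nat.lt_or_ge (T.dist w v) k with hlt | hge
              · exact (I w a hlt hav ha1 ha2).elim
              · omega
            exact hf.2 w a v hav ⟨ha1, ha2⟩ ⟨by omega, by omega⟩
          · rw [gother b hbv hbp hbw] at hb1 hb2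
            exact hf.2 w a b hab ⟨ha1, ha2⟩ ⟨hb1, hb2⟩
    refine ⟨g, hbn, ?_, ?_⟩
    · -- weight preserved
      rw [bweight, bweight, split3 g hvp₁ hvw₂ hp₁w₂, split3 f hvp₁ hvw₂ hp₁w₂]
      have htail : ∑ x ∈ Finset.univ \ {v, p₁, w₂}, g x =
          ∑ x ∈ Finset.univ \ {v, p₁, w₂}, f x := by
        refine Finset.sum_congr rfl (fun x hx => ?_)
        simp only [Finset.mem_sdiff, Finset.mem_insert, Finset.mem_singleton] at hx
        push_neg at hx
        exact gother x hx.2.1 hx.2.2.1 hx.2.2.2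
      rw [htail, gv, gp₁, gw₂, fp₁, fw₂]
      omega
    · -- Phi decreases
      rw [Phi, Phi, split3 (badterm hT g) hvp₁ hvw₂ hp₁w₂,
        split3 (badterm hT f) hvp₁ hvw₂ hp₁w₂]
      have htail : ∑ x ∈ Finset.univ \ {v, p₁, w₂}, badterm hT g x =
          ∑ x ∈ Finset.univ \ {v, p₁, w₂}, badterm hT f x := by
        refine Finset.sum_congr rfl (fun x hx => ?_)
        simp only [Finset.mem_sdiff, Finset.mem_insert, Finset.mem_singleton] at hx
        push_neg at hx
        simp only [badterm, gother x hx.2.1 hx.2.2.1 hx.2.2.2]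
      have b1 : badterm hT g v = 0 := by simp [badterm, gv]
      have b2 : badterm hT g w₂ = 0 := by simp [badterm, gw₂]
      have b3 : badterm hT f p₁ = 0 := by simp [badterm, fp₁]
      have b4 : badterm hT f w₂ = 0 := by simp [badterm, fw₂]
      have b5 : badterm hT f v = (Fintype.card V + 1) * k + mm hT v := by
        simp only [badterm]
        rw [if_pos ⟨hk ▸ hk2, hdeg⟩, ← hk]
      have hmmp₁ : mm hT p₁ ≤ Fintype.card V := mm_le_card hT hadj₁.symm
      have b6 : badterm hT g p₁ ≤ (Fintype.card V + 1) * (k - 1) + Fintype.card V := by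
        simp only [badterm]
        split_ifs with h
        · rw [gp₁]
          omega
        · exact Nat.zero_le _
      have hmul : (Fintype.card V + 1) * (k - 1) + (Fintype.card V + 1) =
          (Fintype.card V + 1) * k := by
        have hsub : k - 1 + 1 = k := by omega
        calc (Fintype.card V + 1) * (k - 1) + (Fintype.card V + 1)
            = (Fintype.card V + 1) * (k - 1 + 1) := (Nat.mul_succ _ _).symm
          _ = (Fintype.card V + 1) * k := by rw [hsub]
      rw [htail, b1, b2, b3, b4, b5]
      omega
  · -- Case B : move the broadcast into the shallowest branch
    push_neg at hA
    obtain ⟨u₂, hadj₂, hdep₂⟩ := mm_mem hT hadj₁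
    have hdepu' : depth hT v u' ≤ k - 2 := by
      refine depth_le hT (fun y hy hdir => ?_)
      have := hA y hy (by rw [hdir]; exact hu'ne)
      omega
    have hdepu₁ : k ≤ depth hT v u₁ := le_trans hz' (le_depth hT (Ne.symm hvz) rfl)
    have hmmle : mm hT v ≤ k - 2 := (mm_le hT hadj').trans hdepu'
    have hu₂ne : u₂ ≠ u₁ := by
      intro he; rw [he] at hdep₂; omega
    have HB : ∀ w, T.dist w u₂ ≤ k → T.dist w v + 1 ≤ k := by
      intro w hw
      by_cases hwv : w = v
      · rw [hwv, SimpleGraph.dist_self]; omega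
      by_cases hdir : dir hT v w = u₂
      · have := hA w hwv (by rw [hdir]; exact hu₂ne)
        rw [SimpleGraph.dist_comm (u := w)]
        omega
      · have hfar := dir_far hT (Ne.symm hwv) hadj₂ (Ne.symm hdir)
        rw [SimpleGraph.dist_comm (u := u₂)] at hfar
        rw [SimpleGraph.dist_comm (u := w) (v := v)]
        omega
    have hdvu₂ : T.dist v u₂ = 1 := SimpleGraph.dist_eq_one_iff_adj.mpr hadj₂
    have fu₂ : f u₂ = 0 := fz u₂ (by rw [SimpleGraph.dist_comm]; omega) hadj₂.ne'
    have hvu₂ : v ≠ u₂ := hadj₂.ne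
    set g : V → ℕ := fun x => if x = v then 0 else if x = u₂ then k else f x with hg
    have gv : g v = 0 := by simp [hg]
    have gu₂ : g u₂ = k := by simp [hg, Ne.symm hvu₂]
    have gother : ∀ x, x ≠ v → x ≠ u₂ → g x = f x := by
      intro x h1 h2; simp [hg, h1, h2]
    have hdu₂z : k ≤ T.dist u₂ z := by
      have := dir_far hT hvz hadj₂ hu₂ne
      omega
    have hbn : BnIndep T g := by
      constructor
      · intro x
        by_cases h1 : x = v
        · rw [h1, gv]; exact Nat.zero_le _
        by_cases h2 : x = u₂
        · rw [h2, gu₂]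
          have : T.dist u₂ z ≤ gecc T u₂ := Finset.le_sup (Finset.mem_univ z)
          omega
        · rw [gother x h1 h2]; exact hf.1 x
      · intro w a b hab ha hb
        obtain ⟨ha1, ha2⟩ := ha
        obtain ⟨hb1, hb2⟩ := hb
        have hav : a ≠ v := by intro he; rw [he, gv] at ha1; omega
        have hbv : b ≠ v := by intro he; rw [he, gv] at hb1; omega
        by_cases hau : a = u₂
        · subst hau
          rw [gu₂] at ha2
          rw [gother b hbv (Ne.symm hab)] at hb1 hb2
          exact (I w b (by have := HB w ha2; omega) hbv hb1 hb2).elim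
        · rw [gother a hav hau] at ha1 ha2 ⊢
          by_cases hbu : b = u₂
          · rw [hbu, gu₂] at hb2
            exact (I w a (by have := HB w hb2; omega) hav ha1 ha2).elim
          · rw [gother b hbv hbu] at hb1 hb2
            exact hf.2 w a b hab ⟨ha1, ha2⟩ ⟨hb1, hb2⟩
    refine ⟨g, hbn, ?_, ?_⟩
    · rw [bweight, bweight, split2 g hvu₂, split2 f hvu₂]
      have htail : ∑ x ∈ Finset.univ \ {v, u₂}, g x =
          ∑ x ∈ Finset.univ \ {v, u₂}, f x := by
        refine Finset.sum_congr rfl (fun x hx => ?_)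
        simp only [Finset.mem_sdiff, Finset.mem_insert, Finset.mem_singleton] at hx
        push_neg at hx
        exact gother x hx.2.1 hx.2.2
      rw [htail, gv, gu₂, fu₂]
      omega
    · rw [Phi, Phi, split2 (badterm hT g) hvu₂, split2 (badterm hT f) hvu₂]
      have htail : ∑ x ∈ Finset.univ \ {v, u₂}, badterm hT g x =
          ∑ x ∈ Finset.univ \ {v, u₂}, badterm hT f x := by
        refine Finset.sum_congr rfl (fun x hx => ?_)
        simp only [Finset.mem_sdiff, Finset.mem_insert, Finset.mem_singleton] at hx
        push_neg at hx
        simp only [badterm, gother x hx.2.1 hx.2.2]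
      have b1 : badterm hT g v = 0 := by simp [badterm, gv]
      have b2 : badterm hT f u₂ = 0 := by simp [badterm, fu₂]
      have b5 : badterm hT f v = (Fintype.card V + 1) * k + mm hT v := by
        simp only [badterm]
        rw [if_pos ⟨hk ▸ hk2, hdeg⟩, ← hk]
      have hmmv1 : 1 ≤ mm hT v := by
        have := one_le_depth hT hadj₂
        omega
      have b6 : badterm hT g u₂ ≤ (Fintype.card V + 1) * k + mm hT v - 1 := by
        simp only [badterm]
        split_ifs with h
        · -- u₂ is a new bad vertex; its min branch depth has dropped
          have hdegu₂ : 2 ≤ T.degree u₂ := by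
            have h1 : 0 < T.degree u₂ := (T.degree_pos_iff_exists_adj u₂).mpr ⟨v, hadj₂.symm⟩
            have := h.2
            omega
          obtain ⟨u₃, hmem₃, hne₃⟩ := Finset.exists_mem_ne
            (s := T.neighborFinset u₂) (by rw [T.card_neighborFinset_eq_degree]; omega) v
          have hadj₃ : T.Adj u₂ u₃ := by rwa [T.mem_neighborFinset] at hmem₃
          have hmmu₂ : mm hT u₂ ≤ mm hT v - 1 := by
            refine (mm_le hT hadj₃).trans (depth_le hT (fun y hy hdir => ?_))
            obtain ⟨hdirv, hdist⟩ := claimC hT hadj₂ hy hdir hne₃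
            have hyv : y ≠ v := by
              intro he
              rw [he, dir_of_adj hT hadj₂.symm] at hdir
              exact hne₃ hdir.symm
            have := le_depth hT hyv hdirv
            omega
          rw [gu₂]
          omega
        · omega
      rw [htail, b1, b2, b5]
      omega

lemma main (hT : T.IsTree) : ∀ (n : ℕ) (f : V → ℕ), Phi hT f ≤ n → BnIndep T f →
    ∃ g, BnIndep T g ∧ bweight g = bweight f ∧
      ∀ v, 0 < g v → T.degree v ≠ 1 → g v = 1 := by
  intro n
  induction n with
  | zero =>
    intro f hP hf
    refine ⟨f, hf, rfl, fun v hv hd => ?_⟩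
    by_contra hv1
    have hbad : 2 ≤ f v ∧ T.degree v ≠ 1 := ⟨by omega, hd⟩
    have h1 : badterm hT f v ≤ Phi hT f :=
      Finset.single_le_sum (f := badterm hT f) (fun x _ => Nat.zero_le _) (Finset.mem_univ v)
    have h2 : 0 < badterm hT f v := by
      simp only [badterm, if_pos hbad]
      have := Nat.mul_pos (show 0 < Fintype.card V + 1 by omega) (show 0 < f v by omega)
      omega
    omega
  | succ n ih =>
    intro f hP hf
    by_cases hbad : ∃ v, 2 ≤ f v ∧ T.degree v ≠ 1
    · obtain ⟨v, hv2, hvd⟩ := hbad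
      obtain ⟨g, hg, hw, hlt⟩ := exchange hT f hf hv2 hvd
      obtain ⟨g', hg', hw', hone⟩ := ih g (by omega) hg
      exact ⟨g', hg', by rw [hw', hw], hone⟩
    · push_neg at hbad
      refine ⟨f, hf, rfl, fun v hv hd => ?_⟩
      rcases Nat.lt_or_ge (f v) 2 with h | h
      · omega
      · exact absurd (hbad v h) hd

end Broadcast

end Stmt7Aux

/-- Every tree has a maximum-weight bn-independent broadcast in which every
non-leaf broadcasting vertex broadcasts with strength 1. -/
theorem stmt7 {V : Type*} [Fintype V] (T : SimpleGraph V) (hT : T.IsTree) :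
    ∃ f : V → ℕ, BnIndep T f ∧ bweight f = alphaBn T ∧
      ∀ v, 0 < f v → T.degree v ≠ 1 → f v = 1 := by
  classical
  obtain ⟨f₀, hf₀, hwt⟩ : ∃ f, BnIndep T f ∧ bweight f = alphaBn T := by
    have h0 : (0 : ℕ) ∈ {w | ∃ f, BnIndep T f ∧ bweight f = w} := by
      refine ⟨fun _ => 0, ⟨fun v => Nat.zero_le _,
        fun w a b hab h1 h2 => absurd h1.1 (lt_irrefl 0)⟩, ?_⟩
      simp [bweight]
    have hbdd : BddAbove {w | ∃ f, BnIndep T f ∧ bweight f = w} := by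
      refine ⟨Fintype.card V * Fintype.card V, fun w hw => ?_⟩
      obtain ⟨f, hf, rfl⟩ := hw
      have hb : ∀ v, f v ≤ Fintype.card V := by
        intro v
        refine (hf.1 v).trans ?_
        rw [gecc]
        exact Finset.sup_le fun u _ => (Stmt7Aux.dist_lt_card hT v u).le
      calc bweight f ≤ ∑ _v : V, Fintype.card V := Finset.sum_le_sum (fun v _ => hb v)
        _ = Fintype.card V * Fintype.card V := by
            rw [Finset.sum_const, Finset.card_univ, smul_eq_mul]
    exact Nat.sSup_mem ⟨0, h0⟩ hbdd
  obtain ⟨g, hg, hw, hone⟩ := Stmt7Aux.main hT (Stmt7Aux.Phi hT f₀) f₀ le_rfl hf₀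
  exact ⟨g, hg, by rw [hw, hwt], hone⟩
end
end

section
/- Let f be a maximum-weight bn-independent broadcast on a tree T chosen so that the number of vertices v with f(v)=1 is maximum. Then for every vertex v with f(v) ≥ 2, the f-private boundary PB_f(v) is empty. -/
open SimpleGraph Finset
open scoped Classical

noncomputable section

/-- If `f` is a maximum-weight bn-independent broadcast on a tree maximizing the
number of vertices with `f v = 1`, then `PB_f(v) = ∅` for all `v` with `f v ≥ 2`. -/
theorem stmt8 {V : Type*} [Fintype V] (T : SimpleGraph V) (hT : T.IsTree)
    (f : V → ℕ) (hf : BnIndep T f) (hmax : bweight f = alphaBn T)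
    (hone : ∀ g : V → ℕ, BnIndep T g → bweight g = alphaBn T →
      (Finset.univ.filter fun v => g v = 1).card ≤
        (Finset.univ.filter fun v => f v = 1).card) :
    ∀ v, 2 ≤ f v → privBoundary T f v = ∅ := by
  intro v hv
  rw [Set.eq_empty_iff_forall_notMem]
  rintro u ⟨hduv, hdom⟩
  have hconn : T.Connected := hT.isConnected
  have hfv1 : 0 < f v - 1 := by omega
  have hduv' : T.dist u v = f v := by
    have h := hdom v
    simp only [Hears, Function.update_self, not_and, not_le] at h
    have := h hfv1
    omega
  have hne_uv : u ≠ v := by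
    intro h; rw [h, SimpleGraph.dist_self] at hduv'; omega
  have hkey : ∀ x, x ≠ v → 0 < f x → f x < T.dist u x := by
    intro x hx hfx
    have h := hdom x
    simp only [Hears, Function.update_of_ne hx, not_and, not_le] at h
    exact h hfx
  have hfu : f u = 0 := by
    by_contra h
    have hpos : 0 < f u := Nat.pos_of_ne_zero h
    have := hf.2 u u v hne_uv ⟨hpos, by simp [SimpleGraph.dist_self]⟩
      ⟨by omega, hduv⟩
    rw [SimpleGraph.dist_self] at this; omega
  set g : V → ℕ := Function.update (Function.update f v (f v - 1)) u 1 with hg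
  have hgu : g u = 1 := by simp [hg]
  have hgv : g v = f v - 1 := by
    rw [hg, Function.update_of_ne (Ne.symm hne_uv), Function.update_self]
  have hgx : ∀ x, x ≠ u → x ≠ v → g x = f x := by
    intro x h1 h2
    rw [hg, Function.update_of_ne h1, Function.update_of_ne h2]
  -- w ≠ u whenever w hears g from some b ≠ u
  have hwu : ∀ w b, b ≠ u → (0 < g b ∧ T.dist w b ≤ g b) → w ≠ u := by
    intro w b hb hbb hwequ
    obtain ⟨hb1, hb2⟩ := hbb
    rw [hwequ] at hb2
    by_cases hbv : b = v
    · rw [hbv, hgv] at hb2; omega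
    · rw [hgx b hb hbv] at hb1 hb2
      have := hkey b hbv hb1
      omega
  have hgbn : BnIndep T g := by
    constructor
    · intro x
      by_cases hx : x = u
      · rw [hx, hgu]
        have h2 : T.dist u v ≤ gecc T u := Finset.le_sup (Finset.mem_univ v)
        omega
      · by_cases hx2 : x = v
        · rw [hx2, hgv]
          have := hf.1 v
          omega
        · rw [hgx x hx hx2]; exact hf.1 x
    · intro w a b hab ha hb
      obtain ⟨ha1, ha2⟩ := ha
      obtain ⟨hb1, hb2⟩ := hb
      by_cases hau : a = u
      · -- need dist w u = 1
        rw [hau] at ha2 ⊢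
        rw [hgu] at ha2 ⊢
        have hwne : w ≠ u := hwu w b (fun h => hab (hau.trans h.symm)) ⟨hb1, hb2⟩
        have := hconn.pos_dist_of_ne hwne
        omega
      · by_cases hav : a = v
        · -- need dist w v = f v - 1
          rw [hav] at ha2 ⊢
          rw [hgv] at ha2 ⊢
          by_cases hbu : b = u
          · rw [hbu, hgu] at hb2
            have htri : T.dist u v ≤ T.dist u w + T.dist w v :=
              hconn.dist_triangle
            have hcomm : T.dist u w = T.dist w u := SimpleGraph.dist_comm
            omega
          · by_cases hbv : b = v
            · exact absurd (hav.trans hbv.symm) hab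
            · rw [hgx b hbu hbv] at hb1 hb2
              have := hf.2 w v b (Ne.symm hbv) ⟨by omega, by omega⟩ ⟨hb1, hb2⟩
              omega
        · -- a ∉ {u,v}: need dist w a = f a
          rw [hgx a hau hav] at ha1 ha2 ⊢
          by_cases hbu : b = u
          · rw [hbu, hgu] at hb1 hb2
            have hwne : w ≠ u := hwu w a hau ⟨by rw [hgx a hau hav]; exact ha1,
              by rw [hgx a hau hav]; exact ha2⟩
            have hpos := hconn.pos_dist_of_ne hwne
            have htri : T.dist u a ≤ T.dist u w + T.dist w a :=
              hconn.dist_triangle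
            have hcomm : T.dist u w = T.dist w u := SimpleGraph.dist_comm
            have hka := hkey a hav ha1
            omega
          · by_cases hbv : b = v
            · rw [hbv, hgv] at hb2
              exact hf.2 w a v hav ⟨ha1, ha2⟩ ⟨by omega, by omega⟩
            · rw [hgx b hbu hbv] at hb1 hb2
              exact hf.2 w a b hab ⟨ha1, ha2⟩ ⟨hb1, hb2⟩
  have hvmem : v ∈ Finset.univ \ {u} := by
    simp [Finset.mem_sdiff, Ne.symm hne_uv]
  have hweight : bweight g = alphaBn T := by
    rw [← hmax]
    unfold bweight
    rw [hg]
    rw [Finset.sum_update_of_mem (Finset.mem_univ u),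
        Finset.sum_update_of_mem hvmem]
    have h1 : ∑ x : V, f x = f u + ∑ x ∈ Finset.univ \ {u}, f x := by
      rw [← Finset.sum_update_of_mem (Finset.mem_univ u)]
      congr 1
      ext x
      by_cases hx : x = u
      · rw [hx, Function.update_self, hfu]
      · rw [Function.update_of_ne hx]
    have h2 : ∑ x ∈ Finset.univ \ {u}, f x =
        f v + ∑ x ∈ (Finset.univ \ {u}) \ {v}, f x := by
      rw [← Finset.sum_update_of_mem hvmem]
      congr 1
      ext x
      by_cases hx : x = v
      · rw [hx, Function.update_self]
      · rw [Function.update_of_ne hx]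
    omega
  have hsub : insert u (Finset.univ.filter fun w => f w = 1) ⊆
      Finset.univ.filter fun w => g w = 1 := by
    intro w hw
    rcases Finset.mem_insert.1 hw with h | h
    · rw [h]; exact Finset.mem_filter.2 ⟨Finset.mem_univ _, hgu⟩
    · have hfw := (Finset.mem_filter.1 h).2
      have hwv : w ≠ v := by intro h'; rw [h'] at hfw; omega
      have hwu2 : w ≠ u := by intro h'; rw [h'] at hfw; omega
      exact Finset.mem_filter.2 ⟨Finset.mem_univ _, by rw [hgx w hwu2 hwv]; exact hfw⟩
  have hnotmem : u ∉ Finset.univ.filter fun w => f w = 1 := by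
    simp [hfu]
  have hcard := Finset.card_le_card hsub
  rw [Finset.card_insert_of_notMem hnotmem] at hcard
  have := hone g hgbn hweight
  omega
end
end

section
/- Let f be a maximum-weight bn-independent broadcast on a tree T such that a leaf l f-dominates a branch vertex w. If l′ is a leaf in L(w) that does not hear f from l, then f(l′) > 0, the l′–w path Q contains a vertex b with d(l,b)=f(l), and f(l′) = d(b,l′). -/
open SimpleGraph Finset
open scoped Classical

noncomputable section

section AuxLemmas

set_option linter.unusedSectionVars false

variable {V : Type*} [Fintype V] {T : SimpleGraph V}

lemma aux_tpath_len (hT : T.IsTree) {u v : V} (p : T.Walk u v) (hp : p.IsPath) :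
    p.length = T.dist u v := by
  obtain ⟨q, hq, hql⟩ := hT.isConnected.exists_path_of_dist u v
  have hpq : (⟨p, hp⟩ : T.Path u v) = ⟨q, hq⟩ := hT.IsAcyclic.path_unique _ _
  have : p = q := congrArg Subtype.val hpq
  rw [this, hql]

lemma aux_adj_dist (h : T.Adj u v) : T.dist u v = 1 :=
  SimpleGraph.dist_eq_one_iff_adj.mpr h

lemma aux_dist_getVert_le (hconn : T.Connected) {u v : V} (q : T.Walk u v) :
    ∀ i, T.dist u (q.getVert i) ≤ i := by
  induction q with
  | nil => intro i; simp [SimpleGraph.Walk.getVert, SimpleGraph.dist_self]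
  | @cons a b c h p ih =>
    intro i
    match i with
    | 0 => simp
    | (i+1) =>
      rw [SimpleGraph.Walk.getVert_cons_succ]
      have h1 : T.dist a b = 1 := aux_adj_dist h
      have h2 := ih i
      have h3 := hconn.dist_triangle (u := a) (v := b) (w := p.getVert i)
      omega

lemma aux_getVert_dist_le {u v : V} (q : T.Walk u v) :
    ∀ i, T.dist (q.getVert i) v ≤ q.length - i := by
  induction q with
  | nil => intro i; simp [SimpleGraph.Walk.getVert]
  | @cons a b c h p ih =>
    intro i
    match i with
    | 0 =>
      have := SimpleGraph.dist_le (SimpleGraph.Walk.cons h p)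
      simpa using this
    | (i+1) =>
      rw [SimpleGraph.Walk.getVert_cons_succ]
      have h2 := ih i
      simp only [SimpleGraph.Walk.length_cons]
      omega

lemma aux_dist_getVert (hT : T.IsTree) {u v : V} (q : T.Walk u v) (hq : q.IsPath)
    {i : ℕ} (hi : i ≤ q.length) :
    T.dist u (q.getVert i) = i ∧ T.dist (q.getVert i) v = q.length - i := by
  have h1 := aux_dist_getVert_le hT.isConnected q i
  have h2 := aux_getVert_dist_le q i
  have h3 : q.length = T.dist u v := aux_tpath_len hT q hq
  have h4 := hT.isConnected.dist_triangle (u := u) (v := q.getVert i) (w := v)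
  omega

lemma aux_getVert_mem {u v : V} (q : T.Walk u v) {i : ℕ} (hi : i ≤ q.length) :
    q.getVert i ∈ q.support :=
  SimpleGraph.Walk.mem_support_iff_exists_getVert.mpr ⟨i, rfl, hi⟩

lemma aux_exists_step (hconn : T.Connected) {y z : V} (h : y ≠ z) :
    ∃ z', T.Adj z z' ∧ T.dist y z = T.dist y z' + 1 := by
  obtain ⟨r, hr⟩ := hconn.exists_walk_length_eq_dist y z
  have hpos : 0 < T.dist y z := hconn.pos_dist_of_ne h
  have hnn : ¬ r.reverse.Nil := by
    rw [SimpleGraph.Walk.nil_iff_length_eq, SimpleGraph.Walk.length_reverse]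
    omega
  obtain ⟨z', hadj, s, hs⟩ := SimpleGraph.Walk.not_nil_iff.mp hnn
  refine ⟨z', hadj, ?_⟩
  have hlen : s.length + 1 = T.dist y z := by
    have : r.reverse.length = r.length := SimpleGraph.Walk.length_reverse r
    rw [hs] at this
    simp only [SimpleGraph.Walk.length_cons] at this
    omega
  have h1 : T.dist y z' ≤ s.length := by
    have := SimpleGraph.dist_le s.reverse
    rwa [SimpleGraph.Walk.length_reverse] at this
  have h2 : T.dist z' z = 1 := aux_adj_dist hadj.symm
  have h3 := hconn.dist_triangle (u := y) (v := z') (w := z)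
  omega

lemma aux_chain (hconn : T.Connected) {u v : V} (q : T.Walk u v) :
    ∀ m i, i + m ≤ q.length → T.dist (q.getVert i) (q.getVert (i + m)) ≤ m := by
  intro m
  induction m with
  | zero => intro i _; simp
  | succ m ih =>
    intro i hi
    have h1 := ih i (by omega)
    have h2 : T.Adj (q.getVert (i + m)) (q.getVert (i + m + 1)) :=
      q.adj_getVert_succ (by omega)
    have h3 := aux_adj_dist h2
    have h4 := hconn.dist_triangle (u := q.getVert i) (v := q.getVert (i + m))
      (w := q.getVert (i + m + 1))
    have : i + (m + 1) = i + m + 1 := by omega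
    rw [this]
    omega

lemma aux_dist_pair (hT : T.IsTree) {u v : V} (q : T.Walk u v) (hq : q.IsPath)
    {i j : ℕ} (hij : i ≤ j) (hj : j ≤ q.length) :
    T.dist (q.getVert i) (q.getVert j) = j - i := by
  have h1 := aux_chain hT.isConnected q (j - i) i (by omega)
  rw [show i + (j - i) = j from by omega] at h1
  have h2 := (aux_dist_getVert hT q hq (le_trans hij hj)).1
  have h3 := (aux_dist_getVert hT q hq hj).1
  have h4 := hT.isConnected.dist_triangle (u := u) (v := q.getVert i) (w := q.getVert j)
  omega

lemma aux_getVert_inj (hT : T.IsTree) {u v : V} (q : T.Walk u v) (hq : q.IsPath)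
    {i j : ℕ} (hi : i ≤ q.length) (hj : j ≤ q.length) (hij : q.getVert i = q.getVert j) :
    i = j := by
  have h1 := (aux_dist_getVert hT q hq hi).1
  have h2 := (aux_dist_getVert hT q hq hj).1
  rw [hij] at h1
  omega

lemma aux_step (hT : T.IsTree) {w l' : V} (q : T.Walk w l') (hq : q.IsPath)
    (hdeg2 : ∀ u ∈ q.support, u ≠ w → u ≠ l' → T.degree u = 2)
    (hleaf : T.degree l' = 1) {y : V} (hy : y ∉ q.support) :
    ∀ m i, i < q.length → q.length - 1 - i = m →
      T.dist y (q.getVert (i + 1)) = T.dist y (q.getVert i) + 1 := by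
  have hconn := hT.isConnected
  intro m
  induction m with
  | zero =>
    intro i hi hm
    have hil : i + 1 = q.length := by omega
    have hgl : q.getVert (i + 1) = l' := by rw [hil, q.getVert_length]
    have hne : y ≠ l' := fun h => hy (h ▸ q.end_mem_support)
    obtain ⟨z, hz, hdz⟩ := aux_exists_step hconn hne
    have hadj : T.Adj l' (q.getVert i) := by
      have h := q.adj_getVert_succ hi
      rw [hgl] at h
      exact h.symm
    have hcard : (T.neighborFinset l').card = 1 := hleaf
    obtain ⟨a, ha⟩ := Finset.card_eq_one.mp hcard
    have hmem : q.getVert i ∈ T.neighborFinset l' := (T.mem_neighborFinset _ _).mpr hadj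
    have hmemz : z ∈ T.neighborFinset l' := (T.mem_neighborFinset _ _).mpr hz
    rw [ha, Finset.mem_singleton] at hmem hmemz
    rw [hgl, hdz, hmemz, hmem]
  | succ m ih =>
    intro i hi hm
    have h2 : i + 2 ≤ q.length := by omega
    have hin : q.getVert (i + 1) ∈ q.support := aux_getVert_mem q (by omega)
    have hne : y ≠ q.getVert (i + 1) := fun h => hy (h ▸ hin)
    have hnw : q.getVert (i + 1) ≠ w := by
      intro h
      have h0 : q.getVert (i+1) = q.getVert 0 := by rw [h, q.getVert_zero]
      have := aux_getVert_inj hT q hq (by omega) (by omega) h0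
      omega
    have hnl : q.getVert (i + 1) ≠ l' := by
      intro h
      have h0 : q.getVert (i+1) = q.getVert q.length := by rw [h, q.getVert_length]
      have := aux_getVert_inj hT q hq (by omega) le_rfl h0
      omega
    have hdeg : T.degree (q.getVert (i + 1)) = 2 := hdeg2 _ hin hnw hnl
    obtain ⟨z, hz, hdz⟩ := aux_exists_step hconn hne
    have hne02 : q.getVert i ≠ q.getVert (i + 2) := by
      intro h
      have := aux_getVert_inj hT q hq (by omega) h2 h
      omega
    have hpair : T.neighborFinset (q.getVert (i + 1)) = {q.getVert i, q.getVert (i + 2)} := by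
      have hsub : {q.getVert i, q.getVert (i + 2)} ⊆ T.neighborFinset (q.getVert (i + 1)) := by
        intro t ht
        rw [Finset.mem_insert, Finset.mem_singleton] at ht
        rcases ht with rfl | rfl
        · exact (T.mem_neighborFinset _ _).mpr (q.adj_getVert_succ hi).symm
        · have : T.Adj (q.getVert (i + 1)) (q.getVert (i + 1 + 1)) :=
            q.adj_getVert_succ (by omega)
          rw [show i + 1 + 1 = i + 2 from by omega] at this
          exact (T.mem_neighborFinset _ _).mpr this
      refine (Finset.eq_of_subset_of_card_le hsub ?_).symm
      rw [Finset.card_insert_of_notMem (by simpa using hne02), Finset.card_singleton]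
      exact le_of_eq hdeg
    have hzmem : z ∈ T.neighborFinset (q.getVert (i + 1)) := (T.mem_neighborFinset _ _).mpr hz
    rw [hpair, Finset.mem_insert, Finset.mem_singleton] at hzmem
    rcases hzmem with rfl | rfl
    · exact hdz
    · have hstep := ih (i + 1) (by omega) (by omega)
      rw [show i + 1 + 1 = i + 2 from by omega] at hstep
      omega

lemma aux_endpath_dist (hT : T.IsTree) {w l' : V} (q : T.Walk w l') (hq : q.IsPath)
    (hdeg2 : ∀ u ∈ q.support, u ≠ w → u ≠ l' → T.degree u = 2)
    (hleaf : T.degree l' = 1) {y : V} (hy : y ∉ q.support) :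
    ∀ i ≤ q.length, T.dist y (q.getVert i) = T.dist y w + i := by
  intro i hi
  induction i with
  | zero => rw [q.getVert_zero]; omega
  | succ i ihh =>
    have hstep := aux_step hT q hq hdeg2 hleaf hy (q.length - 1 - i) i (by omega) rfl
    rw [hstep, ihh (by omega)]; omega

lemma aux_bn_no_hear {V : Type*} [Fintype V] {T : SimpleGraph V} {f : V → ℕ}
    (hf : BnIndep T f) {x y : V} (hxy : x ≠ y) (hx : 0 < f x) (hy : Hears T f x y) :
    False := by
  have h := hf.2 x x y hxy ⟨hx, by simp [SimpleGraph.dist_self]⟩ hy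
  rw [SimpleGraph.dist_self] at h
  omega

end AuxLemmas

/-- If a leaf `l` `f`-dominates a branch vertex `w` in a maximum-weight
bn-independent broadcast and `l' ∈ L(w)` does not hear `f` from `l`, then `l'`
broadcasts, the `l'-w` path contains a vertex `b ∈ B_f(l)`, and `f(l') = d(b,l')`. -/
theorem stmt9 {V : Type*} [Fintype V] (T : SimpleGraph V) (hT : T.IsTree)
    (f : V → ℕ) (hf : BnIndep T f) (hmax : bweight f = alphaBn T)
    (l w l' : V) (hl : T.degree l = 1) (hw : 3 ≤ T.degree w)
    (hdom : Hears T f w l) (hl' : l' ∈ leafSet T w) (hnh : ¬ Hears T f l' l) :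
    0 < f l' ∧ ∃ p : T.Walk l' w, p.IsPath ∧ ∃ b ∈ p.support,
      T.dist l b = f l ∧ f l' = T.dist b l' := by
  have hconn := hT.isConnected
  have hep : IsEndpathTo T w l' := (Finset.mem_filter.mp hl').2
  obtain ⟨hl'deg, q, hq, hdeg2⟩ := hep
  have hfl : 0 < f l := hdom.1
  have hdwl : T.dist w l ≤ f l := hdom.2
  have hll' : f l < T.dist l' l := by
    by_contra h
    push_neg at h
    exact hnh ⟨hfl, h⟩
  have hlw : l ≠ w := by intro h; rw [← h] at hw; omega
  have hlnl' : l ≠ l' := by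
    intro h
    rw [h, SimpleGraph.dist_self] at hll'
    omega
  have hnsupp : l ∉ q.support := by
    intro h
    have := hdeg2 l h hlw hlnl'
    omega
  have hC : ∀ i ≤ q.length, T.dist l (q.getVert i) = T.dist l w + i :=
    aux_endpath_dist hT q hq hdeg2 hl'deg hnsupp
  have hcomm : T.dist l w = T.dist w l := SimpleGraph.dist_comm
  have hcomm2 : T.dist l' l = T.dist l l' := SimpleGraph.dist_comm
  have hdll' : T.dist l l' = T.dist w l + q.length := by
    have h := hC q.length le_rfl
    rw [q.getVert_length, hcomm] at h
    exact h
  obtain ⟨k, hdk⟩ : ∃ k, T.dist w l + k = f l := ⟨f l - T.dist w l, by omega⟩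
  have hkn : k < q.length := by omega
  have hbl : T.dist l (q.getVert k) = f l := by
    rw [hC k (by omega), hcomm]
    omega
  have hbl' : T.dist (q.getVert k) l' = q.length - k :=
    (aux_dist_getVert hT q hq (le_of_lt hkn)).2
  have hhears_b_l : Hears T f (q.getVert k) l :=
    ⟨hfl, by rw [SimpleGraph.dist_comm]; omega⟩
  have hgvn : q.getVert q.length = l' := q.getVert_length
  have hseg0 : ∀ j, j ≤ k → f (q.getVert j) = 0 := by
    intro j hj
    by_contra h0
    have hpos : 0 < f (q.getVert j) := Nat.pos_of_ne_zero h0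
    have hne : q.getVert j ≠ l := fun hz => hnsupp (hz ▸ aux_getVert_mem q (by omega))
    have hcj := hC j (by omega)
    have hhear : Hears T f (q.getVert j) l := by
      refine ⟨hfl, ?_⟩
      rw [SimpleGraph.dist_comm]
      omega
    exact aux_bn_no_hear hf hne hpos hhear
  have hflub : f l' ≤ q.length - k := by
    by_contra h
    push_neg at h
    have hhear : Hears T f (q.getVert k) l' := ⟨by omega, by omega⟩
    have := hf.2 (q.getVert k) l' l (Ne.symm hlnl') hhear hhears_b_l
    omega
  have hfllb : ¬ (f l' < q.length - k) := by
    intro hlow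
    classical
    set g : V → ℕ := fun v => if v = l' then q.length - k else if v ∈ q.support then 0 else f v
      with hgdef
    have hgl' : g l' = q.length - k := by simp [hgdef]
    have hg0 : ∀ v, v ≠ l' → v ∈ q.support → g v = 0 := by
      intro v h1 h2; simp [hgdef, h1, h2]
    have hgf : ∀ v, v ∉ q.support → g v = f v := by
      intro v h2
      have h1 : v ≠ l' := fun hz => h2 (hz ▸ q.end_mem_support)
      simp [hgdef, h1, h2]
    have hbound : ∀ y, y ∉ q.support → 0 < f y → T.dist (q.getVert k) y ≤ f y →
        T.dist (q.getVert k) y = f y := by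
      intro y hy hpos hle
      by_cases hyl : y = l
      · subst hyl
        rw [SimpleGraph.dist_comm]
        omega
      · exact hf.2 (q.getVert k) y l hyl ⟨hpos, hle⟩ hhears_b_l
    have hH3 : ∀ i, k < i → i ≤ q.length → ∀ y, y ∉ q.support → 0 < f y →
        ¬ (T.dist (q.getVert i) y ≤ f y) := by
      intro i hki hin y hy hpos hle
      have hCy : ∀ j ≤ q.length, T.dist y (q.getVert j) = T.dist y w + j :=
        aux_endpath_dist hT q hq hdeg2 hl'deg hy
      have hyi := hCy i hin
      have hyk := hCy k (by omega)
      have hcy : T.dist (q.getVert i) y = T.dist y (q.getVert i) := SimpleGraph.dist_comm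
      by_cases hyl : y = l
      · subst hyl
        omega
      · have hble : T.dist (q.getVert k) y ≤ f y := by
          rw [SimpleGraph.dist_comm]
          omega
        have hbe := hbound y hy hpos hble
        rw [SimpleGraph.dist_comm] at hbe
        omega
    have hH2 : ∀ u, T.dist u l' ≤ q.length - k → ∃ i, k ≤ i ∧ i ≤ q.length ∧ u = q.getVert i := by
      intro u hu
      by_cases hus : u ∈ q.support
      · obtain ⟨i, hgi, hin⟩ := SimpleGraph.Walk.mem_support_iff_exists_getVert.mp hus
        have hdi : T.dist (q.getVert i) l' = q.length - i := (aux_dist_getVert hT q hq hin).2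
        rw [← hgi] at hu
        exact ⟨i, by omega, hin, hgi.symm⟩
      · exfalso
        have hCu := aux_endpath_dist hT q hq hdeg2 hl'deg hus q.length le_rfl
        rw [hgvn] at hCu
        have hne : u ≠ w := fun hz => hus (hz ▸ q.start_mem_support)
        have hpos : 0 < T.dist u w := hconn.pos_dist_of_ne hne
        omega
    have hgb : BnIndep T g := by
      constructor
      · intro v
        by_cases h1 : v = l'
        · rw [h1, hgl']
          have hle : T.dist l' w ≤ gecc T l' :=
            Finset.le_sup (f := fun u => T.dist l' u) (Finset.mem_univ w)
          have hdl'w : T.dist l' w = q.length := by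
            rw [SimpleGraph.dist_comm]
            exact (aux_tpath_len hT q hq).symm
          omega
        · by_cases h2 : v ∈ q.support
          · rw [hg0 v h1 h2]; exact Nat.zero_le _
          · rw [hgf v h2]; exact hf.1 v
      · intro u v₁ v₂ hne h1 h2
        have key : ∀ v, v ≠ l' → Hears T g u v → v ∉ q.support ∧ Hears T f u v ∧ g v = f v := by
          intro v hv hh
          have hh1 := hh.1
          have hh2 := hh.2
          have hvs : v ∉ q.support := by
            intro hs
            rw [hg0 v hv hs] at hh1
            omega
          have hge : g v = f v := hgf v hvs
          rw [hge] at hh1 hh2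
          exact ⟨hvs, ⟨hh1, hh2⟩, hge⟩
        by_cases hv1 : v₁ = l'
        · rw [hv1] at h1 hne ⊢
          have h12 := h1.2
          rw [hgl'] at h12
          obtain ⟨i, hki, hin, hui⟩ := hH2 u h12
          subst hui
          obtain ⟨hvs, hhf, hgv⟩ := key v₂ (Ne.symm hne) h2
          have hik : i = k := by
            by_contra hik
            exact hH3 i (by omega) hin v₂ hvs hhf.1 hhf.2
          rw [hgl']
          have hdi : T.dist (q.getVert i) l' = q.length - i := (aux_dist_getVert hT q hq hin).2
          omega
        · by_cases hv2 : v₂ = l'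
          · subst hv2
            have h22 := h2.2
            rw [hgl'] at h22
            obtain ⟨i, hki, hin, hui⟩ := hH2 u h22
            subst hui
            obtain ⟨hvs, hhf, hgv⟩ := key v₁ hv1 h1
            have hik : i = k := by
              by_contra hik
              exact hH3 i (by omega) hin v₁ hvs hhf.1 hhf.2
            rw [hgv, hik]
            exact hbound v₁ hvs hhf.1 (by rw [← hik]; exact hhf.2)
          · obtain ⟨_, hf1, hg1⟩ := key v₁ hv1 h1
            obtain ⟨_, hf2, hg2⟩ := key v₂ hv2 h2
            rw [hg1]
            exact hf.2 u v₁ v₂ hne hf1 hf2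
    -- weight comparison
    have hinjn : ∀ a ∈ Finset.range (q.length + 1), ∀ b ∈ Finset.range (q.length + 1),
        q.getVert a = q.getVert b → a = b := by
      intro a ha b hb hab
      rw [Finset.mem_range] at ha hb
      exact aux_getVert_inj hT q hq (by omega) (by omega) hab
    have hmemA : ∀ v, v ∈ q.support.toFinset ↔ v ∈ q.support := fun v => List.mem_toFinset
    have himg : q.support.toFinset = (Finset.range (q.length + 1)).image q.getVert := by
      ext v
      simp only [List.mem_toFinset, Finset.mem_image, Finset.mem_range, Nat.lt_succ_iff,
        SimpleGraph.Walk.mem_support_iff_exists_getVert]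
      constructor
      · rintro ⟨i, h1, h2⟩; exact ⟨i, h2, h1⟩
      · rintro ⟨i, h1, h2⟩; exact ⟨i, h2, h1⟩
    have hsumA : ∑ v ∈ q.support.toFinset, f v
        = ∑ j ∈ Finset.range (q.length + 1), f (q.getVert j) := by
      rw [himg, Finset.sum_image hinjn]
    have hKsub : (Finset.Ioc k q.length).filter (fun j => 0 < f (q.getVert j))
        ⊆ Finset.range (q.length + 1) := by
      intro j hj
      rw [Finset.mem_filter, Finset.mem_Ioc] at hj
      rw [Finset.mem_range]
      omega
    have hsumK : ∑ j ∈ Finset.range (q.length + 1), f (q.getVert j)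
        = ∑ j ∈ (Finset.Ioc k q.length).filter (fun j => 0 < f (q.getVert j)), f (q.getVert j) := by
      symm
      apply Finset.sum_subset hKsub
      intro j hjr hjK
      rw [Finset.mem_range] at hjr
      by_contra h0
      have hpos : 0 < f (q.getVert j) := Nat.pos_of_ne_zero h0
      have hjk : j ≤ k := by
        by_contra hh
        exact hjK (Finset.mem_filter.mpr ⟨Finset.mem_Ioc.mpr ⟨by omega, by omega⟩, hpos⟩)
      exact h0 (hseg0 j hjk)
    have hFle : ∀ j, k < j → j ≤ q.length → 0 < f (q.getVert j) → f (q.getVert j) ≤ j - k := by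
      intro j hkj hjn hpos
      by_cases hjn' : j = q.length
      · subst hjn'
        rw [hgvn]
        omega
      · by_contra hgt
        push_neg at hgt
        have hdij : T.dist (q.getVert k) (q.getVert j) = j - k :=
          aux_dist_pair hT q hq (by omega) (by omega)
        have hne : q.getVert j ≠ l := fun hz => hnsupp (hz ▸ aux_getVert_mem q (by omega))
        have := hf.2 (q.getVert k) (q.getVert j) l hne ⟨hpos, by omega⟩ hhears_b_l
        omega
    have hpairK : ∀ j j', k < j → j ≤ q.length → 0 < f (q.getVert j) →
        k < j' → j' < j → 0 < f (q.getVert j') → f (q.getVert j) < j - j' := by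
      intro j j' hkj hjn hpos hkj' hlt hpos'
      by_contra hge
      push_neg at hge
      have hdij : T.dist (q.getVert j') (q.getVert j) = j - j' :=
        aux_dist_pair hT q hq (by omega) (by omega)
      have hne : q.getVert j' ≠ q.getVert j := by
        intro h
        have := aux_getVert_inj hT q hq (by omega) (by omega) h
        omega
      exact aux_bn_no_hear hf hne hpos' ⟨hpos, by omega⟩
    have hcardS : ∀ j ∈ (Finset.Ioc k q.length).filter (fun j => 0 < f (q.getVert j)),
        (Finset.Ioc (j - f (q.getVert j)) j).card = f (q.getVert j) := by
      intro j hj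
      rw [Finset.mem_filter, Finset.mem_Ioc] at hj
      have h1 := hFle j hj.1.1 hj.1.2 hj.2
      rw [Nat.card_Ioc]
      omega
    have hdisj : ∀ a ∈ (Finset.Ioc k q.length).filter (fun j => 0 < f (q.getVert j)),
        ∀ b ∈ (Finset.Ioc k q.length).filter (fun j => 0 < f (q.getVert j)), a ≠ b →
        Disjoint (Finset.Ioc (a - f (q.getVert a)) a) (Finset.Ioc (b - f (q.getVert b)) b) := by
      have key : ∀ a b, a ∈ (Finset.Ioc k q.length).filter (fun j => 0 < f (q.getVert j)) →
          b ∈ (Finset.Ioc k q.length).filter (fun j => 0 < f (q.getVert j)) → a < b →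
          Disjoint (Finset.Ioc (a - f (q.getVert a)) a) (Finset.Ioc (b - f (q.getVert b)) b) := by
        intro a b ha hb hab
        rw [Finset.mem_filter, Finset.mem_Ioc] at ha hb
        have hp := hpairK b a hb.1.1 hb.1.2 hb.2 ha.1.1 hab ha.2
        rw [Finset.disjoint_left]
        intro i hia hib
        rw [Finset.mem_Ioc] at hia hib
        omega
      intro a ha b hb hab
      rcases lt_or_gt_of_ne hab with h | h
      · exact key a b ha hb h
      · exact (key b a hb ha h).symm
    have hbiU : ((Finset.Ioc k q.length).filter (fun j => 0 < f (q.getVert j))).biUnion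
        (fun j => Finset.Ioc (j - f (q.getVert j)) j)
        ⊆ (Finset.Ioc k q.length).erase (q.length - f l') := by
      intro i hi
      rw [Finset.mem_biUnion] at hi
      obtain ⟨j, hjK, hij⟩ := hi
      rw [Finset.mem_filter, Finset.mem_Ioc] at hjK
      have h1 := hFle j hjK.1.1 hjK.1.2 hjK.2
      rw [Finset.mem_Ioc] at hij
      rw [Finset.mem_erase, Finset.mem_Ioc]
      refine ⟨?_, by omega, by omega⟩
      by_cases hjn : j = q.length
      · subst hjn
        rw [hgvn] at hij
        omega
      · by_cases hfl'0 : f l' = 0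
        · omega
        · have hp := hpairK q.length j (by omega) le_rfl (by rw [hgvn]; omega)
            (by omega) (by omega) hjK.2
          rw [hgvn] at hp
          omega
    have hsumbound : ∑ j ∈ (Finset.Ioc k q.length).filter (fun j => 0 < f (q.getVert j)),
        f (q.getVert j) ≤ q.length - k - 1 := by
      have hcardbi := Finset.card_biUnion hdisj
      have hsum_eq := Finset.sum_congr rfl hcardS
      have hle := Finset.card_le_card hbiU
      have hmem : q.length - f l' ∈ Finset.Ioc k q.length := Finset.mem_Ioc.mpr ⟨by omega, by omega⟩
      rw [Finset.card_erase_of_mem hmem, Nat.card_Ioc] at hle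
      omega
    have hsub_univ : q.support.toFinset ⊆ Finset.univ := Finset.subset_univ _
    have hsdf := Finset.sum_sdiff (f := f) hsub_univ
    have hsdg := Finset.sum_sdiff (f := g) hsub_univ
    have hgA : ∑ v ∈ q.support.toFinset, g v = q.length - k := by
      rw [Finset.sum_eq_single_of_mem l' ((hmemA l').mpr q.end_mem_support)]
      · exact hgl'
      · intro v hv hvne
        exact hg0 v hvne ((hmemA v).mp hv)
    have hgout : ∑ v ∈ Finset.univ \ q.support.toFinset, g v
        = ∑ v ∈ Finset.univ \ q.support.toFinset, f v := by
      apply Finset.sum_congr rfl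
      intro v hv
      rw [Finset.mem_sdiff] at hv
      exact hgf v (fun hs => hv.2 ((hmemA v).mpr hs))
    have hwlt : bweight f < bweight g := by
      have h1 : ∑ v ∈ q.support.toFinset, f v ≤ q.length - k - 1 := by
        rw [hsumA, hsumK]
        exact hsumbound
      unfold bweight
      omega
    have hbdd : BddAbove {w | ∃ f, BnIndep T f ∧ bweight f = w} := by
      refine ⟨∑ v, gecc T v, ?_⟩
      rintro s ⟨f', hf', rfl⟩
      exact Finset.sum_le_sum (fun v _ => hf'.1 v)
    have hle2 : bweight g ≤ alphaBn T := by
      unfold alphaBn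
      exact le_csSup hbdd ⟨g, hgb, rfl⟩
    rw [← hmax] at hle2
    omega
  have hfl' : f l' = q.length - k := by omega
  refine ⟨by omega, q.reverse, hq.reverse, q.getVert k, ?_, hbl, by omega⟩
  rw [SimpleGraph.Walk.support_reverse]
  exact List.mem_reverse.mpr (aux_getVert_mem q (by omega))
end
end
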